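/- arXiv:1606.01944 — 10 statements merged into one kernel-verified Lean document; each statement's English description precedes it below -/
import Mathlib

section
/- Let k ≥ 1 be an integer and S > 0. Let C_1, …, C_m be subsets of ℝ^d whose union is ℝ^d, such that for each i and all nonzero y, z ∈ C_i one has ‖y/‖y‖ − z/‖z‖‖ < 1. Let V be a finite set of points in ℝ^d containing the origin 0, in which all pairwise distances between distinct points are distinct, and suppose that for each i the set C_i contains at least k+1 points of V \ {0} of norm strictly less than S. Then for every nonzero v ∈ V: if 0 is a k-nearest neighbor of v in V, or v is a k-nearest neighbor of 0 in V, then ‖v‖ < S. -/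
/-- All pairwise distances between distinct points of `V` are distinct. -/
def DistinctDists {d : ℕ} (V : Set (EuclideanSpace ℝ (Fin d))) : Prop :=
  ∀ u v u' v', u ∈ V → v ∈ V → u' ∈ V → v' ∈ V → u ≠ v → u' ≠ v' →
    dist u v = dist u' v' → (u = u' ∧ v = v') ∨ (u = v' ∧ v = u')

/-- `u` is a `k`-nearest neighbor of `v` within `V`:  `u ∈ V \ {v}` and fewer than `k`
points of `V \ {v}` are strictly closer to `v` than `u` is. -/
def IsKNNOf {d : ℕ} (k : ℕ) (V : Set (EuclideanSpace ℝ (Fin d)))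
    (u v : EuclideanSpace ℝ (Fin d)) : Prop :=
  u ∈ V ∧ u ≠ v ∧ {w | w ∈ V ∧ w ≠ v ∧ dist w v < dist u v}.ncard < k

/-- In a cone of angular radius `< 60°`, if `‖y‖ ≤ ‖z‖` then `‖y - z‖ < ‖z‖`. -/
lemma cone_dist_lt {d : ℕ} (y z : EuclideanSpace ℝ (Fin d))
    (hy : y ≠ 0) (hz : z ≠ 0)
    (hang : ‖‖y‖⁻¹ • y - ‖z‖⁻¹ • z‖ < 1) (hle : ‖y‖ ≤ ‖z‖) :
    ‖y - z‖ < ‖z‖ := by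
  have ha : 0 < ‖y‖ := norm_pos_iff.mpr hy
  have hb : 0 < ‖z‖ := norm_pos_iff.mpr hz
  have h1 : ‖‖y‖⁻¹ • y‖ = 1 := norm_smul_inv_norm hy
  have h2 : ‖‖z‖⁻¹ • z‖ = 1 := norm_smul_inv_norm hz
  have hsq : ‖‖y‖⁻¹ • y - ‖z‖⁻¹ • z‖ ^ 2 < 1 := by
    calc ‖‖y‖⁻¹ • y - ‖z‖⁻¹ • z‖ ^ 2 ≤ ‖‖y‖⁻¹ • y - ‖z‖⁻¹ • z‖ * 1 := by
          rw [sq]; exact mul_le_mul_of_nonneg_left hang.le (norm_nonneg _)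
      _ < 1 := by simpa using hang
  have hexp : ‖‖y‖⁻¹ • y - ‖z‖⁻¹ • z‖ ^ 2
      = 2 - 2 * (‖y‖⁻¹ * ‖z‖⁻¹ * inner ℝ y z) := by
    rw [norm_sub_sq_real, h1, h2, real_inner_smul_left, real_inner_smul_right]
    ring
  have hinner : ‖y‖ * ‖z‖ / 2 < inner ℝ y z := by
    have h : 1 / 2 < ‖y‖⁻¹ * ‖z‖⁻¹ * inner ℝ y z := by
      rw [hexp] at hsq; linarith
    have := (div_lt_iff₀ (by positivity : (0:ℝ) < 2)).mp h
    calc ‖y‖ * ‖z‖ / 2 = (1/2) * (‖y‖ * ‖z‖) := by ring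
      _ < (‖y‖⁻¹ * ‖z‖⁻¹ * inner ℝ y z) * (‖y‖ * ‖z‖) := by
          apply mul_lt_mul_of_pos_right h; positivity
      _ = inner ℝ y z := by field_simp
  have hyz : ‖y - z‖ ^ 2 < ‖z‖ ^ 2 := by
    rw [norm_sub_sq_real]
    nlinarith [sq_nonneg (‖y‖ - ‖z‖)]
  exact lt_of_pow_lt_pow_left₀ 2 hb.le hyz

/-- Lemma on the radius of stabilization: if every cone `C i` contains at least `k+1` points of
`V \ {0}` of norm `< S`, then any point `v ∈ V` such that `0` is a `k`NN of `v` or `v` is a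
`k`NN of `0` satisfies `‖v‖ < S`. -/
theorem norm_lt_of_kNN_zero (d k m : ℕ) (hk : 1 ≤ k) (S : ℝ) (hS : 0 < S)
    (C : Fin m → Set (EuclideanSpace ℝ (Fin d)))
    (hC : (⋃ i, C i) = Set.univ)
    (hcone : ∀ i, ∀ y ∈ C i, ∀ z ∈ C i, y ≠ 0 → z ≠ 0 →
      ‖‖y‖⁻¹ • y - ‖z‖⁻¹ • z‖ < 1)
    (V : Set (EuclideanSpace ℝ (Fin d))) (hVfin : V.Finite)
    (h0 : (0 : EuclideanSpace ℝ (Fin d)) ∈ V)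
    (hdist : DistinctDists V)
    (hpts : ∀ i, k + 1 ≤ {p | p ∈ V ∧ p ≠ 0 ∧ p ∈ C i ∧ ‖p‖ < S}.ncard)
    (v : EuclideanSpace ℝ (Fin d)) (hv : v ∈ V) (hv0 : v ≠ 0)
    (hknn : IsKNNOf k V 0 v ∨ IsKNNOf k V v 0) :
    ‖v‖ < S := by
  by_contra h
  push_neg at h
  obtain ⟨i, hvC⟩ : ∃ i, v ∈ C i := by
    have : v ∈ ⋃ i, C i := hC ▸ Set.mem_univ v
    simpa using this
  set P := {p | p ∈ V ∧ p ≠ 0 ∧ p ∈ C i ∧ ‖p‖ < S} with hP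
  have hPV : P ⊆ V := fun p hp => hp.1
  rcases hknn with ⟨_, _, hlt⟩ | ⟨_, _, hlt⟩
  · -- 0 is a kNN of v
    have hsub : P ⊆ {w | w ∈ V ∧ w ≠ v ∧ dist w v < dist 0 v} := by
      rintro p ⟨hpV, hp0, hpC, hpS⟩
      have hpv : ‖p‖ < ‖v‖ := lt_of_lt_of_le hpS h
      refine ⟨hpV, fun he => by simp [he] at hpv, ?_⟩
      rw [dist_eq_norm, dist_eq_norm, zero_sub, norm_neg]
      exact cone_dist_lt p v hp0 hv0 (hcone i p hpC v hvC hp0 hv0) hpv.le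
    have hfin : {w | w ∈ V ∧ w ≠ v ∧ dist w v < dist 0 v}.Finite :=
      hVfin.subset (fun w hw => hw.1)
    have := (hpts i).trans (Set.ncard_le_ncard hsub hfin)
    omega
  · -- v is a kNN of 0
    have hsub : P ⊆ {w | w ∈ V ∧ w ≠ 0 ∧ dist w 0 < dist v 0} := by
      rintro p ⟨hpV, hp0, hpC, hpS⟩
      refine ⟨hpV, hp0, ?_⟩
      rw [dist_zero_right, dist_zero_right]
      exact lt_of_lt_of_le hpS h
    have hfin : {w | w ∈ V ∧ w ≠ 0 ∧ dist w 0 < dist v 0}.Finite :=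
      hVfin.subset (fun w hw => hw.1)
    have := (hpts i).trans (Set.ncard_le_ncard hsub hfin)
    omega
end

section
/- Let k ≥ 1 be an integer and let S, T > 0 be real numbers with T > 3S. Let C_1, …, C_m be subsets of ℝ^d whose union is ℝ^d, such that for each i and all nonzero y, z ∈ C_i one has ‖y/‖y‖ − z/‖z‖‖ < 1. Let V be a finite set of points in ℝ^d in which all pairwise distances between distinct points are distinct, and suppose that for each i the set C_i contains at least k points of V whose norms lie in the interval (3S, T]. Let u, v ∈ V with ‖u‖ < S and ‖v‖ > 3T. Then u is not a k-nearest neighbor of v in V, and v is not a k-nearest neighbor of u in V. -/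
lemma inner_big {d : ℕ} (p v : EuclideanSpace ℝ (Fin d)) (hp0 : p ≠ 0) (hv0 : v ≠ 0)
    (h : ‖‖p‖⁻¹ • p - ‖v‖⁻¹ • v‖ < 1) : ‖p‖ * ‖v‖ < 2 * inner ℝ p v := by
  have hp : (0:ℝ) < ‖p‖ := norm_pos_iff.mpr hp0
  have hv : (0:ℝ) < ‖v‖ := norm_pos_iff.mpr hv0
  have h1 : ‖‖p‖⁻¹ • p‖ = 1 := by
    rw [norm_smul, norm_inv, norm_norm]; field_simp
  have h2 : ‖‖v‖⁻¹ • v‖ = 1 := by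
    rw [norm_smul, norm_inv, norm_norm]; field_simp
  have hsq : ‖‖p‖⁻¹ • p - ‖v‖⁻¹ • v‖ ^ 2 < 1 := by
    nlinarith [norm_nonneg (‖p‖⁻¹ • p - ‖v‖⁻¹ • v)]
  rw [@norm_sub_sq_real (EuclideanSpace ℝ (Fin d)) _ _, h1, h2] at hsq
  rw [real_inner_smul_left, real_inner_smul_right] at hsq
  have key : (1:ℝ)/2 < ‖p‖⁻¹ * (‖v‖⁻¹ * inner ℝ p v) := by nlinarith
  have := mul_lt_mul_of_pos_left key (mul_pos hp hv)
  calc ‖p‖ * ‖v‖ = ‖p‖ * ‖v‖ * (2 * (1/2)) := by ring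
    _ < ‖p‖ * ‖v‖ * (2 * (‖p‖⁻¹ * (‖v‖⁻¹ * inner ℝ p v))) := by
        nlinarith [mul_pos hp hv]
    _ = 2 * inner ℝ p v := by field_simp

/-- Second stabilization lemma: if each cone `C i` contains at least `k` points of `V` with
norms in `(3S, T]`, `‖u‖ < S` and `‖v‖ > 3T` with `T > 3S`, then `u` and `v` are not
`k`-nearest neighbors of each other in `V`. -/
theorem not_kNN_of_far (d k m : ℕ) (hk : 1 ≤ k) (S T : ℝ) (hS : 0 < S) (hT : 0 < T)
    (hTS : 3 * S < T)
    (C : Fin m → Set (EuclideanSpace ℝ (Fin d)))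
    (hC : (⋃ i, C i) = Set.univ)
    (hcone : ∀ i, ∀ y ∈ C i, ∀ z ∈ C i, y ≠ 0 → z ≠ 0 →
      ‖‖y‖⁻¹ • y - ‖z‖⁻¹ • z‖ < 1)
    (V : Set (EuclideanSpace ℝ (Fin d))) (hVfin : V.Finite)
    (hdist : DistinctDists V)
    (hpts : ∀ i, k ≤ {p | p ∈ V ∧ p ∈ C i ∧ 3 * S < ‖p‖ ∧ ‖p‖ ≤ T}.ncard)
    (u v : EuclideanSpace ℝ (Fin d)) (hu : u ∈ V) (hv : v ∈ V)
    (huS : ‖u‖ < S) (hvT : 3 * T < ‖v‖) :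
    ¬ IsKNNOf k V u v ∧ ¬ IsKNNOf k V v u := by
  have hv0 : v ≠ 0 := by
    intro h; rw [h, norm_zero] at hvT; linarith
  obtain ⟨i, hvCi⟩ : ∃ i, v ∈ C i := by
    have : v ∈ ⋃ i, C i := by rw [hC]; trivial
    simpa using this
  set P : Set (EuclideanSpace ℝ (Fin d)) :=
    {p | p ∈ V ∧ p ∈ C i ∧ 3 * S < ‖p‖ ∧ ‖p‖ ≤ T} with hP
  have hPsubV : P ⊆ V := fun p hp => hp.1
  have hduv : ‖v‖ - S < dist u v := by
    have : ‖v‖ - ‖u‖ ≤ dist u v := by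
      rw [dist_eq_norm]
      have := norm_sub_norm_le (u - v) u
      simp at this
      calc ‖v‖ - ‖u‖ ≤ ‖v - u‖ := by
            have := norm_sub_norm_le v u; linarith
        _ = ‖u - v‖ := norm_sub_rev v u
    linarith
  constructor
  · rintro ⟨_, _, hcard⟩
    have hsub : P ⊆ {w | w ∈ V ∧ w ≠ v ∧ dist w v < dist u v} := by
      rintro p ⟨hpV, hpC, hp3S, hpT⟩
      have hp0 : p ≠ 0 := by
        intro h; rw [h, norm_zero] at hp3S; linarith
      have hinner := inner_big p v hp0 hv0 (hcone i p hpC v hvCi hp0 hv0)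
      have hpv : dist p v < dist u v := by
        have hsq : dist p v ^ 2 < (‖v‖ - S) ^ 2 := by
          rw [dist_eq_norm, @norm_sub_sq_real (EuclideanSpace ℝ (Fin d)) _ _]
          nlinarith [norm_nonneg p, norm_nonneg v]
        have h1 : dist p v < ‖v‖ - S :=
          lt_of_pow_lt_pow_left₀ 2 (by linarith) (by nlinarith)
        linarith
      refine ⟨hpV, ?_, hpv⟩
      intro h
      rw [h] at hpT; linarith
    have : k ≤ {w | w ∈ V ∧ w ≠ v ∧ dist w v < dist u v}.ncard :=
      le_trans (hpts i) (Set.ncard_le_ncard hsub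
        (hVfin.subset (fun w hw => hw.1)))
    omega
  · rintro ⟨_, _, hcard⟩
    have hsub : P ⊆ {w | w ∈ V ∧ w ≠ u ∧ dist w u < dist v u} := by
      rintro p ⟨hpV, hpC, hp3S, hpT⟩
      have hdvu : ‖v‖ - S < dist v u := by rwa [dist_comm] at hduv
      have hpu : dist p u < dist v u := by
        have h2 : dist p u ≤ ‖p‖ + ‖u‖ := by
          rw [dist_eq_norm]; exact norm_sub_le p u
        linarith
      refine ⟨hpV, ?_, hpu⟩
      intro h
      rw [h] at hp3S; linarith
    have : k ≤ {w | w ∈ V ∧ w ≠ u ∧ dist w u < dist v u}.ncard :=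
      le_trans (hpts i) (Set.ncard_le_ncard hsub
        (hVfin.subset (fun w hw => hw.1)))
    omega
end

section
/- Let v_1, …, v_m be distinct nonzero points of ℝ^d such that for all i ≠ j one has ‖v_i − v_j‖ > ‖v_i‖ and ‖v_i − v_j‖ > ‖v_j‖ (i.e., each pair is farther from each other than either point is from the origin). Then the normalized points a_i = v_i/‖v_i‖ lie on the unit sphere and satisfy ‖a_i − a_j‖ > 1 for all i ≠ j. -/
/-- If `v 1, …, v m` are distinct nonzero points such that each pair is farther from each other
than either point is from the origin, then their normalizations lie on the unit sphere and have
pairwise distances strictly greater than `1`. -/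
theorem normalized_dist_gt_one (d m : ℕ) (v : Fin m → EuclideanSpace ℝ (Fin d))
    (hinj : Function.Injective v) (hne : ∀ i, v i ≠ 0)
    (hfar : ∀ i j, i ≠ j → ‖v i‖ < ‖v i - v j‖ ∧ ‖v j‖ < ‖v i - v j‖) :
    (∀ i, ‖‖v i‖⁻¹ • v i‖ = 1) ∧
    (∀ i j, i ≠ j → 1 < ‖‖v i‖⁻¹ • v i - ‖v j‖⁻¹ • v j‖) := by
  have hunit : ∀ i, ‖‖v i‖⁻¹ • v i‖ = 1 := fun i => norm_smul_inv_norm (hne i)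
  refine ⟨hunit, fun i j hij => ?_⟩
  set a := ‖v i‖⁻¹ • v i with ha
  set b := ‖v j‖⁻¹ • v j with hb
  have hi : (0:ℝ) < ‖v i‖ := norm_pos_iff.mpr (hne i)
  have hj : (0:ℝ) < ‖v j‖ := norm_pos_iff.mpr (hne j)
  obtain ⟨h1, h2⟩ := hfar i j hij
  -- expand the squared norm of v i - v j
  have hsq : ‖v i - v j‖ ^ 2 = ‖v i‖ ^ 2 - 2 * inner ℝ (v i) (v j) + ‖v j‖ ^ 2 :=
    norm_sub_sq_real (v i) (v j)
  have h1' : ‖v i‖ ^ 2 < ‖v i - v j‖ ^ 2 := by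
    apply pow_lt_pow_left₀ h1 (norm_nonneg _)
    norm_num
  have h2' : ‖v j‖ ^ 2 < ‖v i - v j‖ ^ 2 := by
    apply pow_lt_pow_left₀ h2 (norm_nonneg _)
    norm_num
  have hin1 : 2 * (inner ℝ (v i) (v j) : ℝ) < ‖v j‖ ^ 2 := by linarith
  have hin2 : 2 * (inner ℝ (v i) (v j) : ℝ) < ‖v i‖ ^ 2 := by linarith
  have hmin : 2 * (inner ℝ (v i) (v j) : ℝ) < ‖v i‖ * ‖v j‖ := by
    rcases le_total (‖v i‖) (‖v j‖) with h | h
    · nlinarith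
    · nlinarith
  have hiab : (inner ℝ a b : ℝ) = ‖v i‖⁻¹ * ‖v j‖⁻¹ * inner ℝ (v i) (v j) := by
    rw [ha, hb, real_inner_smul_left, real_inner_smul_right]; ring
  have hiab' : (inner ℝ a b : ℝ) < 1 / 2 := by
    rw [hiab]
    have hone : ‖v i‖⁻¹ * ‖v j‖⁻¹ * (‖v i‖ * ‖v j‖) = 1 := by field_simp
    nlinarith [mul_pos (inv_pos.mpr hi) (inv_pos.mpr hj)]
  have hsq2 : ‖a - b‖ ^ 2 = ‖a‖ ^ 2 - 2 * inner ℝ a b + ‖b‖ ^ 2 := norm_sub_sq_real a b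
  rw [hunit i] at hsq2
  rw [hunit j] at hsq2
  have : 1 < ‖a - b‖ ^ 2 := by rw [hsq2]; nlinarith
  nlinarith [norm_nonneg (a - b)]
end

section
/- Let k ≥ 1 be an integer, let V be a finite set of points in ℝ^d containing the origin 0 in which all pairwise distances between distinct points are distinct, and let v_1, …, v_m be distinct points of V \ {0} each of which has 0 among its k nearest neighbors in V. Then there exists a subset {u_1, …, u_t} of {v_1, …, v_m} with m ≤ t·k such that ‖u_i − u_j‖ > max{‖u_i‖, ‖u_j‖} for all 1 ≤ i ≠ j ≤ t. -/
lemma aux_sep (d k : ℕ) (V : Set (EuclideanSpace ℝ (Fin d))) (hVfin : V.Finite)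
    (h0 : (0 : EuclideanSpace ℝ (Fin d)) ∈ V) (hdist : DistinctDists V) :
    ∀ (n : ℕ) (S : Set (EuclideanSpace ℝ (Fin d))), S.ncard ≤ n → S ⊆ V →
      (∀ x ∈ S, x ≠ 0) → (∀ x ∈ S, IsKNNOf k V 0 x) →
      ∃ (t : ℕ) (u : Fin t → EuclideanSpace ℝ (Fin d)), Function.Injective u ∧
        Set.range u ⊆ S ∧ S.ncard ≤ t * k ∧
        ∀ i j, i ≠ j → max ‖u i‖ ‖u j‖ < ‖u i - u j‖ := by
  intro n
  induction n with
  | zero =>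
    intro S hcard _ _ _
    refine ⟨0, Fin.elim0, fun i => i.elim0, ?_, by simpa using hcard, fun i => i.elim0⟩
    rintro x ⟨i, -⟩; exact i.elim0
  | succ n ih =>
    intro S hcard hSV hS0 hknn
    have hSfin : S.Finite := hVfin.subset hSV
    rcases S.eq_empty_or_nonempty with rfl | hne
    · refine ⟨0, Fin.elim0, fun i => i.elim0, ?_, by simp, fun i => i.elim0⟩
      rintro x ⟨i, -⟩; exact i.elim0
    · -- pick x of maximal norm
      obtain ⟨x, hxS, hxmax⟩ := hSfin.exists_maximalFor (fun y => ‖y‖) S hne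
      have hxmax' : ∀ y ∈ S, ‖y‖ ≤ ‖x‖ := by
        intro y hy
        by_contra h
        push_neg at h
        exact absurd (hxmax hy h.le) (not_le.2 h)
      set S' : Set (EuclideanSpace ℝ (Fin d)) := {w ∈ S | ‖x‖ < dist w x} with hS'def
      have hS'sub : S' ⊆ S := fun w hw => hw.1
      have hxnot : x ∉ S' := by
        intro hx
        have h2 : ‖x‖ < dist x x := hx.2
        rw [dist_self] at h2
        exact (norm_nonneg x).not_gt h2
      have hssub : S' ⊂ S := ⟨hS'sub, fun h => hxnot (h hxS)⟩
      have hlt : S'.ncard < S.ncard := Set.ncard_lt_ncard hssub hSfin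
      obtain ⟨t, u', hu'inj, hu'range, hu'card, hu'sep⟩ :=
        ih S' (by omega) (hS'sub.trans hSV) (fun y hy => hS0 y (hS'sub hy))
          (fun y hy => hknn y (hS'sub hy))
      -- count the removed points
      have hNknn := (hknn x hxS).2.2
      have hNfin : {w | w ∈ V ∧ w ≠ x ∧ dist w x < dist 0 x}.Finite :=
        hVfin.subset (fun w hw => hw.1)
      have hdiff : S \ S' ⊆ insert x {w | w ∈ V ∧ w ≠ x ∧ dist w x < dist 0 x} := by
        rintro w ⟨hwS, hwS'⟩
        by_cases hwx : w = x
        · exact Set.mem_insert_iff.2 (Or.inl hwx)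
        · have hle : dist w x ≤ ‖x‖ := by
            by_contra h
            push_neg at h
            exact hwS' ⟨hwS, h⟩
          have h0x : dist (0 : EuclideanSpace ℝ (Fin d)) x = ‖x‖ := by
            simp [dist_eq_norm]
          refine Set.mem_insert_iff.2 (Or.inr ⟨hSV hwS, hwx, ?_⟩)
          rw [h0x]
          rcases lt_or_eq_of_le hle with h | h
          · exact h
          · exfalso
            have hx0 : x ≠ 0 := hS0 x hxS
            have := hdist w x 0 x (hSV hwS) (hSV hxS) h0 (hSV hxS) hwx
              (fun hc => hx0 hc.symm) (by rw [h, h0x])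
            rcases this with ⟨h1, -⟩ | ⟨h1, h2⟩
            · exact hS0 w hwS h1
            · exact hwx h1
      have hdiffcard : (S \ S').ncard ≤ k := by
        have h1 : (S \ S').ncard ≤ (insert x {w | w ∈ V ∧ w ≠ x ∧ dist w x < dist 0 x}).ncard :=
          Set.ncard_le_ncard hdiff (hNfin.insert x)
        have h2 := Set.ncard_insert_le x {w | w ∈ V ∧ w ≠ x ∧ dist w x < dist 0 x}
        omega
      have hScard : S.ncard ≤ S'.ncard + k := by
        have h1 := Set.ncard_diff hS'sub (hSfin.subset hS'sub)
        have h2 : S'.ncard ≤ S.ncard := hlt.le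
        omega
      -- assemble
      refine ⟨t + 1, Fin.cons x u', ?_, ?_, ?_, ?_⟩
      · refine (Fin.cons_injective_iff).2 ⟨?_, hu'inj⟩
        intro hx
        exact hxnot (hu'range hx)
      · rintro y ⟨i, rfl⟩
        refine Fin.cases ?_ ?_ i
        · simpa using hxS
        · intro j
          simpa using hS'sub (hu'range ⟨j, rfl⟩)
      · calc S.ncard ≤ S'.ncard + k := hScard
          _ ≤ t * k + k := by omega
          _ = (t + 1) * k := by ring
      · intro i j hij
        have key : ∀ j : Fin t, max ‖x‖ ‖u' j‖ < ‖x - u' j‖ := by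
          intro j
          have hj : u' j ∈ S' := hu'range ⟨j, rfl⟩
          have h1 : ‖u' j‖ ≤ ‖x‖ := hxmax' _ (hS'sub hj)
          have h2 : ‖x‖ < dist (u' j) x := hj.2
          rw [dist_eq_norm] at h2
          rw [max_eq_left h1, ← norm_neg (x - u' j)]
          simpa using h2
        rcases Fin.eq_zero_or_eq_succ i with rfl | ⟨i', rfl⟩ <;>
          rcases Fin.eq_zero_or_eq_succ j with rfl | ⟨j', rfl⟩
        · exact absurd rfl hij
        · simp only [Fin.cons_zero, Fin.cons_succ]
          exact key j'
        · simp only [Fin.cons_zero, Fin.cons_succ]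
          rw [max_comm, ← norm_neg (u' i' - x)]
          simpa using key i'
        · simp only [Fin.cons_succ]
          exact hu'sep i' j' (fun h => hij (by rw [h]))

/-- If `v 1, …, v m` are distinct points of `V \ {0}` each having the origin among its `k`
nearest neighbors in `V`, then there is a subset `{u 1, …, u t}` of `{v 1, …, v m}` with
`m ≤ t·k` such that `‖u i − u j‖ > max ‖u i‖ ‖u j‖` for all `i ≠ j`. -/
theorem exists_separated_subset (d k m : ℕ) (hk : 1 ≤ k)
    (V : Set (EuclideanSpace ℝ (Fin d))) (hVfin : V.Finite)
    (h0 : (0 : EuclideanSpace ℝ (Fin d)) ∈ V) (hdist : DistinctDists V)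
    (v : Fin m → EuclideanSpace ℝ (Fin d)) (hinj : Function.Injective v)
    (hvV : ∀ i, v i ∈ V ∧ v i ≠ 0)
    (hknn : ∀ i, IsKNNOf k V 0 (v i)) :
    ∃ (t : ℕ) (u : Fin t → EuclideanSpace ℝ (Fin d)), Function.Injective u ∧
      Set.range u ⊆ Set.range v ∧ m ≤ t * k ∧
      ∀ i j, i ≠ j → max ‖u i‖ ‖u j‖ < ‖u i - u j‖ := by
  obtain ⟨t, u, h1, h2, h3, h4⟩ := aux_sep d k V hVfin h0 hdist (Set.range v).ncard
    (Set.range v) le_rfl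
    (by rintro x ⟨i, rfl⟩; exact (hvV i).1)
    (by rintro x ⟨i, rfl⟩; exact (hvV i).2)
    (by rintro x ⟨i, rfl⟩; exact hknn i)
  have hm : (Set.range v).ncard = m := by
    rw [← Set.image_univ, Set.ncard_image_of_injective _ hinj, Set.ncard_univ]
    simp
  exact ⟨t, u, h1, h2, by omega, h4⟩
end

section
/- Let k ≥ 1 be an integer and let V be a finite set of points in ℝ^d in which all pairwise distances between distinct points are distinct. If a vertex v ∈ V has indegree m in the k-nearest-neighbor digraph kNND(V) (i.e., v is a k-nearest neighbor of exactly m points of V), then there exist t points a_1, …, a_t on the unit sphere of ℝ^d with ‖a_i − a_j‖ > 1 for all i ≠ j and with m ≤ t·k. In particular, every indegree in kNND(V) is at most κ'(d)·k, where κ'(d) is the maximum number of points on the unit sphere of ℝ^d with pairwise distances strictly greater than 1. -/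
/-- The indegree of `v` in the `k`NN digraph of `V`: the number of points of `V` having `v`
among their `k` nearest neighbors. -/
noncomputable def inDeg {d : ℕ} (k : ℕ) (V : Set (EuclideanSpace ℝ (Fin d)))
    (v : EuclideanSpace ℝ (Fin d)) : ℕ :=
  {u | u ∈ V ∧ IsKNNOf k V v u}.ncard

/-- `κ'(d)`: the maximum number of points on the unit sphere of `ℝ^d` with pairwise distances
strictly greater than `1`. -/
noncomputable def kappa' (d : ℕ) : ℕ :=
  sSup {t : ℕ | ∃ a : Fin t → EuclideanSpace ℝ (Fin d),
    (∀ i, ‖a i‖ = 1) ∧ ∀ i j, i ≠ j → 1 < ‖a i - a j‖}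

open Classical in
/-- Abstract degeneracy lemma: if each element of `S` has fewer than `k` `R`-neighbors of
smaller rank, then there is an `R`-independent `T ⊆ S` with `S.card ≤ T.card * k`. -/
lemma exists_indep {α : Type*} (k : ℕ) (R : α → α → Prop) (hsym : Symmetric R)
    (f : α → ℝ) (S : Finset α) (hinj : Set.InjOn f S)
    (hdeg : ∀ u ∈ S, (S.filter (fun w => R u w ∧ f w < f u)).card < k) :
    ∃ T : Finset α, T ⊆ S ∧ (∀ a ∈ T, ∀ b ∈ T, a ≠ b → ¬ R a b) ∧ S.card ≤ T.card * k := by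
  classical
  revert hinj hdeg
  induction S using Finset.strongInduction with
  | _ S ih =>
    intro hinj hdeg
    rcases S.eq_empty_or_nonempty with rfl | hne
    · exact ⟨∅, by simp⟩
    obtain ⟨u, hu, hmax⟩ := S.exists_max_image f hne
    set N : Finset α := insert u (S.filter (fun w => R u w)) with hN
    have hNsub : N ⊆ S := by
      intro x hx
      rcases Finset.mem_insert.1 hx with rfl | hx
      · exact hu
      · exact (Finset.mem_filter.1 hx).1
    have hNcard : N.card ≤ k := by
      have h1 : N \ {u} ⊆ S.filter (fun w => R u w ∧ f w < f u) := by
        intro x hx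
        rw [Finset.mem_sdiff, Finset.mem_singleton] at hx
        obtain ⟨hx1, hx2⟩ := hx
        rcases Finset.mem_insert.1 hx1 with rfl | hx1
        · exact absurd rfl hx2
        · rw [Finset.mem_filter] at hx1 ⊢
          refine ⟨hx1.1, hx1.2, ?_⟩
          exact lt_of_le_of_ne (hmax x hx1.1) (fun h => hx2 (hinj hx1.1 hu h))
      have h2 : (N \ {u}).card < k := lt_of_le_of_lt (Finset.card_le_card h1) (hdeg u hu)
      have h3 : N.card ≤ (N \ {u}).card + 1 := by
        have h4 := Finset.card_sdiff_add_card_eq_card (Finset.singleton_subset_iff.2 (Finset.mem_insert_self u _) : {u} ⊆ N)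
        have h5 : ({u} : Finset α).card = 1 := Finset.card_singleton u
        omega
      omega
    have hSS : S \ N ⊂ S := by
      refine Finset.sdiff_ssubset ?_ ?_
      · exact hNsub
      · exact ⟨u, Finset.mem_insert_self u _⟩
    obtain ⟨T', hT'sub, hT'ind, hT'card⟩ := ih (S \ N) hSS
      (hinj.mono (by intro x hx; exact (Finset.mem_sdiff.1 hx).1))
      (by
        intro x hx
        refine lt_of_le_of_lt (Finset.card_le_card ?_) (hdeg x (Finset.mem_sdiff.1 hx).1)
        intro w hw
        rw [Finset.mem_filter] at hw ⊢
        exact ⟨(Finset.mem_sdiff.1 hw.1).1, hw.2⟩)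
    refine ⟨insert u T', ?_, ?_, ?_⟩
    · intro x hx
      rcases Finset.mem_insert.1 hx with rfl | hx
      · exact hu
      · exact (Finset.mem_sdiff.1 (hT'sub hx)).1
    · intro a ha b hb hab
      have key : ∀ x ∈ T', ¬ R u x := by
        intro x hx hR
        have : x ∈ N := Finset.mem_insert_of_mem (Finset.mem_filter.2 ⟨(Finset.mem_sdiff.1 (hT'sub hx)).1, hR⟩)
        exact (Finset.mem_sdiff.1 (hT'sub hx)).2 this
      rcases Finset.mem_insert.1 ha with hae | ha'
      · subst hae
        rcases Finset.mem_insert.1 hb with hbe | hb'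
        · exact absurd hbe.symm hab
        · exact key b hb'
      · rcases Finset.mem_insert.1 hb with hbe | hb'
        · subst hbe
          exact fun h => key a ha' (hsym h)
        · exact hT'ind a ha' b hb' hab
    · have huT' : u ∉ T' := fun h => (Finset.mem_sdiff.1 (hT'sub h)).2 (Finset.mem_insert_self u _)
      rw [Finset.card_insert_of_notMem huT']
      have : S.card ≤ (S \ N).card + N.card := by
        have := Finset.card_sdiff_add_card_eq_card hNsub
        omega
      calc S.card ≤ (S \ N).card + N.card := this
        _ ≤ T'.card * k + k := by omega
        _ = (T'.card + 1) * k := by ring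

/-- Geometric lemma: if `0 < ‖y‖ < ‖x‖` and the normalized directions of `x, y` are at
distance at most `1`, then `‖x - y‖ < ‖x‖`. -/
lemma close_of_dir_close {E : Type*} [NormedAddCommGroup E] [InnerProductSpace ℝ E]
    (x y : E) (hy : 0 < ‖y‖) (hxy : ‖y‖ < ‖x‖)
    (hdir : ‖‖x‖⁻¹ • x - ‖y‖⁻¹ • y‖ ≤ 1) : ‖x - y‖ < ‖x‖ := by
  have hx : 0 < ‖x‖ := lt_trans hy hxy
  have h1 : ‖‖x‖⁻¹ • x - ‖y‖⁻¹ • y‖ ^ 2 ≤ 1 := by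
    nlinarith [norm_nonneg (‖x‖⁻¹ • x - ‖y‖⁻¹ • y)]
  have hsq : ‖‖x‖⁻¹ • x - ‖y‖⁻¹ • y‖ ^ 2
      = ‖‖x‖⁻¹ • x‖^2 - 2 * inner ℝ (‖x‖⁻¹ • x) (‖y‖⁻¹ • y) + ‖‖y‖⁻¹ • y‖^2 :=
    norm_sub_sq_real _ _
  have hnx : ‖‖x‖⁻¹ • x‖ = 1 := by
    rw [norm_smul, Real.norm_eq_abs, abs_inv, abs_norm]
    field_simp
  have hny : ‖‖y‖⁻¹ • y‖ = 1 := by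
    rw [norm_smul, Real.norm_eq_abs, abs_inv, abs_norm]
    field_simp
  have hinner : (inner ℝ (‖x‖⁻¹ • x) (‖y‖⁻¹ • y) : ℝ) = ‖x‖⁻¹ * ‖y‖⁻¹ * inner ℝ x y := by
    rw [real_inner_smul_left, real_inner_smul_right]; ring
  rw [hnx, hny, hinner] at hsq
  rw [hsq] at h1
  have hkey : ‖x‖ * ‖y‖ / 2 ≤ inner ℝ x y := by
    have hxi : ‖x‖⁻¹ > 0 := inv_pos.2 hx
    have hyi : ‖y‖⁻¹ > 0 := inv_pos.2 hy
    have h2 : ‖x‖⁻¹ * ‖y‖⁻¹ * inner ℝ x y ≥ 1/2 := by linarith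
    have h3 : ‖x‖ * ‖x‖⁻¹ = 1 := mul_inv_cancel₀ (ne_of_gt hx)
    have h4 : ‖y‖ * ‖y‖⁻¹ = 1 := mul_inv_cancel₀ (ne_of_gt hy)
    have h5 : (inner ℝ x y : ℝ) = ‖x‖ * ‖y‖ * (‖x‖⁻¹ * ‖y‖⁻¹ * (inner ℝ x y : ℝ)) := by
      field_simp
    rw [h5]
    nlinarith [mul_pos hx hy]
  have hsq2 : ‖x - y‖ ^ 2 = ‖x‖^2 - 2 * inner ℝ x y + ‖y‖^2 := norm_sub_sq_real _ _
  have : ‖x - y‖ ^ 2 < ‖x‖ ^ 2 := by nlinarith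
  exact lt_of_pow_lt_pow_left₀ 2 (norm_nonneg x) this

/-- The set of cardinalities of `1`-separated families on the unit sphere is bounded. -/
lemma kappaSet_bddAbove (d : ℕ) :
    BddAbove {t : ℕ | ∃ a : Fin t → EuclideanSpace ℝ (Fin d),
      (∀ i, ‖a i‖ = 1) ∧ ∀ i j, i ≠ j → 1 < ‖a i - a j‖} := by
  classical
  have hcomp : IsCompact (Metric.sphere (0 : EuclideanSpace ℝ (Fin d)) 1) :=
    isCompact_sphere 0 1
  have htb := hcomp.totallyBounded
  rw [Metric.totallyBounded_iff] at htb
  obtain ⟨F, hFfin, hFcov⟩ := htb (1/2) (by norm_num)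
  haveI := hFfin.fintype
  refine ⟨Fintype.card F, ?_⟩
  rintro t ⟨a, hnorm, hsep⟩
  have hmem : ∀ i, a i ∈ Metric.sphere (0 : EuclideanSpace ℝ (Fin d)) 1 := by
    intro i
    simp [Metric.mem_sphere, dist_eq_norm, hnorm i]
  have hchoice : ∀ i : Fin t, ∃ c : F, a i ∈ Metric.ball (c : EuclideanSpace ℝ (Fin d)) (1/2) := by
    intro i
    have := hFcov (hmem i)
    simp only [Set.mem_iUnion] at this
    obtain ⟨c, hc, hmem'⟩ := this
    exact ⟨⟨c, hc⟩, hmem'⟩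
  choose g hg using hchoice
  have hginj : Function.Injective g := by
    intro i j hij
    by_contra hne
    have h1 := hg i
    have h2 := hg j
    rw [hij] at h1
    have : dist (a i) (a j) < 1 := by
      have d1 := Metric.mem_ball.1 h1
      have d2 := Metric.mem_ball.1 h2
      calc dist (a i) (a j) ≤ dist (a i) ((g j : EuclideanSpace ℝ (Fin d))) + dist ((g j : EuclideanSpace ℝ (Fin d))) (a j) := dist_triangle _ _ _
        _ < 1/2 + 1/2 := by rw [dist_comm ((g j : EuclideanSpace ℝ (Fin d))) (a j)]; exact add_lt_add d1 d2
        _ = 1 := by norm_num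
    rw [dist_eq_norm] at this
    exact absurd this (not_lt.2 (le_of_lt (hsep i j hne)))
  calc t = Fintype.card (Fin t) := (Fintype.card_fin t).symm
    _ ≤ Fintype.card F := Fintype.card_le_of_injective g hginj

/-- If a vertex `v` of the `k`NN digraph of `V` has indegree `m`, then there are `t` points on
the unit sphere with pairwise distances `> 1` and `m ≤ t·k`; in particular `m ≤ κ'(d)·k`. -/
theorem indegree_le_kappa_mul (d k : ℕ) (hk : 1 ≤ k)
    (V : Set (EuclideanSpace ℝ (Fin d))) (hVfin : V.Finite) (hdist : DistinctDists V)
    (v : EuclideanSpace ℝ (Fin d)) (hv : v ∈ V) (m : ℕ) (hm : inDeg k V v = m) :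
    (∃ (t : ℕ) (a : Fin t → EuclideanSpace ℝ (Fin d)),
      (∀ i, ‖a i‖ = 1) ∧ (∀ i j, i ≠ j → 1 < ‖a i - a j‖) ∧ m ≤ t * k) ∧
    m ≤ kappa' d * k := by
  classical
  set S : Set (EuclideanSpace ℝ (Fin d)) := {u | u ∈ V ∧ IsKNNOf k V v u} with hS
  have hSfin : S.Finite := hVfin.subset (fun u hu => hu.1)
  set Sf : Finset (EuclideanSpace ℝ (Fin d)) := hSfin.toFinset with hSf
  have hmS : Sf.card = m := by
    rw [← hm, inDeg]
    exact (Set.ncard_eq_toFinset_card _ hSfin).symm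
  have hSne : ∀ u ∈ Sf, u ∈ V ∧ u ≠ v := by
    intro u hu
    rw [hSf, Set.Finite.mem_toFinset] at hu
    exact ⟨hu.1, fun h => hu.2.2.1 h.symm⟩
  set dir : EuclideanSpace ℝ (Fin d) → EuclideanSpace ℝ (Fin d) :=
    fun u => ‖u - v‖⁻¹ • (u - v) with hdir
  set R : EuclideanSpace ℝ (Fin d) → EuclideanSpace ℝ (Fin d) → Prop :=
    fun u w => ‖dir u - dir w‖ ≤ 1 with hR
  have hsym : Symmetric R := by
    intro a b h
    show ‖dir b - dir a‖ ≤ 1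
    rw [norm_sub_rev]
    exact h
  have hinj : Set.InjOn (fun u => dist u v) Sf := by
    intro a ha b hb hab
    rw [Finset.mem_coe, hSf, Set.Finite.mem_toFinset] at ha hb
    by_contra hne
    have h1 : a ≠ v := fun h => ha.2.2.1 h.symm
    have h2 : b ≠ v := fun h => hb.2.2.1 h.symm
    rcases hdist a v b v ha.1 hv hb.1 hv h1 h2 hab with ⟨h3, _⟩ | ⟨h3, h4⟩
    · exact hne h3
    · exact h1 h3
  have hdeg : ∀ u ∈ Sf, (Sf.filter (fun w => R u w ∧ dist w v < dist u v)).card < k := by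
    intro u hu
    have hu' : u ∈ S := (Set.Finite.mem_toFinset hSfin).1 hu
    obtain ⟨huV, hknn⟩ := hu'
    obtain ⟨hvV, hvu, hcnt⟩ := hknn
    set W : Set (EuclideanSpace ℝ (Fin d)) := {w | w ∈ V ∧ w ≠ u ∧ dist w u < dist v u} with hW
    have hWfin : W.Finite := hVfin.subset (fun w hw => hw.1)
    have hsub : Sf.filter (fun w => R u w ∧ dist w v < dist u v) ⊆ hWfin.toFinset := by
      intro w hw
      rw [Finset.mem_filter] at hw
      obtain ⟨hwS, hRuw, hwlt⟩ := hw
      have hwS' : w ∈ S := (Set.Finite.mem_toFinset hSfin).1 hwS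
      have hwv : w ≠ v := fun h => hwS'.2.2.1 h.symm
      have hwu : w ≠ u := by
        intro h; rw [h] at hwlt; exact lt_irrefl _ hwlt
      rw [Set.Finite.mem_toFinset, hW]
      refine ⟨hwS'.1, hwu, ?_⟩
      have hposw : 0 < ‖w - v‖ := by
        rw [norm_pos_iff, sub_ne_zero]; exact hwv
      have hlt : ‖w - v‖ < ‖u - v‖ := by
        rw [← dist_eq_norm, ← dist_eq_norm]; exact hwlt
      have hclose : ‖(u - v) - (w - v)‖ < ‖u - v‖ :=
        close_of_dir_close (u - v) (w - v) hposw hlt hRuw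
      rw [sub_sub_sub_cancel_right] at hclose
      rw [dist_comm w u, dist_comm v u, dist_eq_norm, dist_eq_norm]
      exact hclose
    calc (Sf.filter (fun w => R u w ∧ dist w v < dist u v)).card
        ≤ hWfin.toFinset.card := Finset.card_le_card hsub
      _ = W.ncard := (Set.ncard_eq_toFinset_card _ hWfin).symm
      _ < k := hcnt
  obtain ⟨T, hTsub, hTind, hTcard⟩ := exists_indep k R hsym (fun u => dist u v) Sf hinj hdeg
  set t := T.card with ht
  set e := T.equivFin with he
  set a : Fin t → EuclideanSpace ℝ (Fin d) := fun i => dir ((e.symm i : EuclideanSpace ℝ (Fin d))) with ha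
  have hnorm : ∀ i, ‖a i‖ = 1 := by
    intro i
    have hmem : ((e.symm i : EuclideanSpace ℝ (Fin d))) ∈ Sf := hTsub (e.symm i).2
    have hne : ((e.symm i : EuclideanSpace ℝ (Fin d))) - v ≠ 0 := by
      rw [sub_ne_zero]; exact (hSne _ hmem).2
    show ‖dir _‖ = 1
    rw [hdir]
    simp only []
    rw [norm_smul, Real.norm_eq_abs, abs_inv, abs_norm,
      inv_mul_cancel₀ (norm_ne_zero_iff.2 hne)]
  have hpair : ∀ i j, i ≠ j → 1 < ‖a i - a j‖ := by
    intro i j hij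
    have hne : (e.symm i : EuclideanSpace ℝ (Fin d)) ≠ (e.symm j : EuclideanSpace ℝ (Fin d)) :=
      fun h => hij (e.symm.injective (Subtype.ext h))
    have hind := hTind _ (e.symm i).2 _ (e.symm j).2 hne
    exact not_le.mp hind
  have hmt : m ≤ t * k := by rw [← hmS]; exact hTcard
  refine ⟨⟨t, a, hnorm, hpair, hmt⟩, ?_⟩
  have htk : t ≤ kappa' d := le_csSup (kappaSet_bddAbove d) ⟨a, hnorm, hpair⟩
  calc m ≤ t * k := hmt
    _ ≤ kappa' d * k := Nat.mul_le_mul_right k htk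
end

section
/- Let k, t ≥ 1 be integers and suppose there exist t points on the unit sphere of ℝ^d with pairwise distances strictly greater than 1. Then for every integer j with 0 ≤ j ≤ t·k and every integer n ≥ k(t+1)+2, there exists a set V of n points in ℝ^d, with all pairwise distances between distinct points distinct, such that some vertex of the k-nearest-neighbor digraph kNND(V) has indegree exactly j; that is, Q_j^{(k)}(V) > 0. -/
open Set Metric MeasureTheory

section Aux

variable {d : ℕ}

/-- Generic point choice: near any point `x` one can find a point `p` avoiding a finite set `V`,
all perpendicular bisectors of pairs from `V`, and all spheres around points of `V` with radii
equal to existing distances. -/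
lemma exists_generic_point [Nontrivial (EuclideanSpace ℝ (Fin d))]
    (V : Set (EuclideanSpace ℝ (Fin d))) (hV : V.Finite)
    (x : EuclideanSpace ℝ (Fin d)) {δ : ℝ} (hδ : 0 < δ) :
    ∃ p : EuclideanSpace ℝ (Fin d), dist p x < δ ∧ p ∉ V ∧
      (∀ y ∈ V, ∀ z ∈ V, dist p y = dist p z → y = z) ∧
      (∀ y ∈ V, ∀ u ∈ V, ∀ v ∈ V, dist p y ≠ dist u v) := by
  classical
  set B : Set (EuclideanSpace ℝ (Fin d)) :=
    (⋃ y ∈ V, ⋃ z ∈ V, ⋃ (_ : y ≠ z), (AffineSubspace.perpBisector y z : Set _)) ∪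
      (⋃ y ∈ V, ⋃ u ∈ V, ⋃ v ∈ V, sphere y (dist u v)) with hB
  have hBnull : volume B = 0 := by
    rw [hB]
    refine measure_union_null ?_ ?_
    · rw [measure_biUnion_null_iff hV.countable]
      intro y hy
      rw [measure_biUnion_null_iff hV.countable]
      intro z hz
      rw [measure_iUnion_null_iff]
      intro hne
      exact Measure.addHaar_affineSubspace volume _
        (by simpa using (AffineSubspace.perpBisector_eq_top (p₁ := y) (p₂ := z)).not.mpr hne)
    · rw [measure_biUnion_null_iff hV.countable]
      intro y hy
      rw [measure_biUnion_null_iff hV.countable]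
      intro u hu
      rw [measure_biUnion_null_iff hV.countable]
      intro v hv
      exact Measure.addHaar_sphere volume y (dist u v)
  have hball : volume (ball x δ) ≠ 0 := (measure_ball_pos volume x hδ).ne'
  have hne : (ball x δ \ B).Nonempty := by
    by_contra h
    rw [Set.not_nonempty_iff_eq_empty, Set.diff_eq_empty] at h
    exact hball (measure_mono_null h hBnull)
  obtain ⟨p, hpball, hpB⟩ := hne
  have hsphere : ∀ y ∈ V, ∀ u ∈ V, ∀ v ∈ V, dist p y ≠ dist u v := by
    intro y hy u hu v hv hd
    apply hpB
    rw [hB]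
    refine Or.inr ?_
    simp only [Set.mem_iUnion]
    exact ⟨y, hy, u, hu, v, hv, Metric.mem_sphere.mpr hd⟩
  have hpV : p ∉ V := by
    intro hp
    exact hsphere p hp p hp p hp (by simp)
  refine ⟨p, mem_ball.mp hpball, hpV, ?_, hsphere⟩
  intro y hy z hz hd
  by_contra hne
  apply hpB
  rw [hB]
  refine Or.inl ?_
  simp only [Set.mem_iUnion]
  exact ⟨y, hy, z, hz, hne, (AffineSubspace.mem_perpBisector_iff_dist_eq).mpr hd⟩

lemma distinctDists_insert {V : Set (EuclideanSpace ℝ (Fin d))} (hV : DistinctDists V)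
    {q : EuclideanSpace ℝ (Fin d)} (hq : q ∉ V)
    (h1 : ∀ y ∈ V, ∀ z ∈ V, dist q y = dist q z → y = z)
    (h2 : ∀ y ∈ V, ∀ u ∈ V, ∀ v ∈ V, dist q y ≠ dist u v) :
    DistinctDists (insert q V) := by
  intro u v u' v' hu hv hu' hv' huv hu'v' hd
  rcases Set.mem_insert_iff.mp hu with h₁ | h₁ <;>
    rcases Set.mem_insert_iff.mp hv with h₂ | h₂ <;>
      rcases Set.mem_insert_iff.mp hu' with h₃ | h₃ <;>
        rcases Set.mem_insert_iff.mp hv' with h₄ | h₄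
  · exact absurd (h₁.trans h₂.symm) huv
  · exact absurd (h₁.trans h₂.symm) huv
  · exact absurd (h₁.trans h₂.symm) huv
  · exact absurd (h₁.trans h₂.symm) huv
  · exact absurd (h₃.trans h₄.symm) hu'v'
  · -- u = q, v ∈ V, u' = q, v' ∈ V
    refine Or.inl ⟨h₁.trans h₃.symm, h1 v h₂ v' h₄ ?_⟩
    rw [h₁, h₃] at hd; exact hd
  · -- u = q, v ∈ V, u' ∈ V, v' = q
    refine Or.inr ⟨h₁.trans h₄.symm, h1 v h₂ u' h₃ ?_⟩
    rw [h₁, h₄] at hd; rw [hd]; exact dist_comm u' q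
  · -- u = q, v ∈ V, u' ∈ V, v' ∈ V
    exfalso
    rw [h₁] at hd
    exact h2 v h₂ u' h₃ v' h₄ hd
  · exact absurd (h₃.trans h₄.symm) hu'v'
  · -- u ∈ V, v = q, u' = q, v' ∈ V
    refine Or.inr ⟨h1 u h₁ v' h₄ ?_, h₂.trans h₃.symm⟩
    rw [h₂, h₃] at hd; rw [← hd]; exact dist_comm q u
  · -- u ∈ V, v = q, u' ∈ V, v' = q
    refine Or.inl ⟨h1 u h₁ u' h₃ ?_, h₂.trans h₄.symm⟩
    rw [h₂, h₄] at hd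
    rw [dist_comm q u, dist_comm q u']; exact hd
  · -- u ∈ V, v = q, u' ∈ V, v' ∈ V
    exfalso
    rw [h₂] at hd
    exact h2 u h₁ u' h₃ v' h₄ ((dist_comm q u).trans hd)
  · exact absurd (h₃.trans h₄.symm) hu'v'
  · -- u,v ∈ V, u' = q, v' ∈ V
    exfalso
    rw [h₃] at hd
    exact h2 v' h₄ u h₁ v h₂ hd.symm
  · -- u,v ∈ V, u' ∈ V, v' = q
    exfalso
    rw [h₄] at hd
    exact h2 u' h₃ u h₁ v h₂ ((dist_comm q u').trans hd.symm)
  · exact hV u v u' v' h₁ h₂ h₃ h₄ huv hu'v' hd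

lemma range_snoc_eq {m : ℕ} (p : Fin m → EuclideanSpace ℝ (Fin d))
    (q : EuclideanSpace ℝ (Fin d)) :
    Set.range (Fin.snoc p q : Fin (m + 1) → EuclideanSpace ℝ (Fin d)) =
      insert q (Set.range p) := by
  ext x
  constructor
  · rintro ⟨i, rfl⟩
    rcases Fin.eq_castSucc_or_eq_last i with ⟨i₀, rfl⟩ | rfl
    · exact Or.inr ⟨i₀, by simp⟩
    · exact Or.inl (by simp)
  · rintro (rfl | ⟨i, rfl⟩)
    · exact ⟨Fin.last m, by simp⟩
    · exact ⟨i.castSucc, by simp⟩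

/-- One can perturb any finite family of target points, each by less than `δ`, to obtain an
injective family with all pairwise distances distinct. -/
lemma exists_perturb [Nontrivial (EuclideanSpace ℝ (Fin d))] {δ : ℝ} (hδ : 0 < δ) :
    ∀ (m : ℕ) (T : Fin m → EuclideanSpace ℝ (Fin d)),
      ∃ p : Fin m → EuclideanSpace ℝ (Fin d),
        (∀ i, dist (p i) (T i) < δ) ∧ Function.Injective p ∧ DistinctDists (Set.range p) := by
  intro m
  induction m with
  | zero =>
    intro T
    refine ⟨Fin.elim0, fun i => i.elim0, fun i => i.elim0, ?_⟩
    intro u v u' v' hu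
    obtain ⟨i, -⟩ := hu
    exact i.elim0
  | succ m ih =>
    intro T
    obtain ⟨p, hp, hinj, hdd⟩ := ih (fun i => T i.castSucc)
    obtain ⟨q, hq1, hq2, hq3, hq4⟩ :=
      exists_generic_point (Set.range p) (Set.finite_range p) (T (Fin.last m)) hδ
    refine ⟨Fin.snoc p q, ?_, ?_, ?_⟩
    · intro i
      rcases Fin.eq_castSucc_or_eq_last i with ⟨i₀, rfl⟩ | rfl
      · simpa using hp i₀
      · simpa using hq1
    · intro i i' h
      rcases Fin.eq_castSucc_or_eq_last i with ⟨i₀, rfl⟩ | rfl <;>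
        rcases Fin.eq_castSucc_or_eq_last i' with ⟨i₀', rfl⟩ | rfl
      · simp only [Fin.snoc_castSucc] at h
        exact congrArg Fin.castSucc (hinj h)
      · simp only [Fin.snoc_castSucc, Fin.snoc_last] at h
        exact absurd ⟨i₀, h⟩ hq2
      · simp only [Fin.snoc_castSucc, Fin.snoc_last] at h
        exact absurd ⟨i₀', h.symm⟩ hq2
      · rfl
    · rw [range_snoc_eq]
      exact distinctDists_insert hdd hq2 hq3 hq4

/-- Compare the cardinality of a set of indices in `Fin n` via its image in `ℕ`. -/
lemma ncard_eq_of_val_image {n : ℕ} (S : Set (Fin n)) (F : Finset ℕ)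
    (h : Fin.val '' S = ↑F) : S.ncard = F.card := by
  rw [← Set.ncard_coe_finset, ← h, Set.ncard_image_of_injective _ Fin.val_injective]

lemma ncard_le_of_val_image_subset {n : ℕ} (S : Set (Fin n)) (F : Finset ℕ)
    (h : Fin.val '' S ⊆ ↑F) : S.ncard ≤ F.card := by
  rw [← Set.ncard_coe_finset, ← Set.ncard_image_of_injective S Fin.val_injective]
  exact Set.ncard_le_ncard h F.finite_toSet

end Aux

/-- If there are `t` points on the unit sphere of `ℝ^d` with pairwise distances `> 1`, then for
every `0 ≤ j ≤ t·k` and every `n ≥ k(t+1)+2` there is a set `V` of `n` points with distinct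
pairwise distances whose `k`NN digraph has a vertex of indegree exactly `j`. -/
theorem exists_config_with_indegree (d k t : ℕ) (hk : 1 ≤ k) (ht : 1 ≤ t)
    (a : Fin t → EuclideanSpace ℝ (Fin d))
    (ha1 : ∀ i, ‖a i‖ = 1) (ha : ∀ i j, i ≠ j → 1 < ‖a i - a j‖) :
    ∀ j ≤ t * k, ∀ n, k * (t + 1) + 2 ≤ n →
      ∃ V : Set (EuclideanSpace ℝ (Fin d)), V.Finite ∧ V.ncard = n ∧
        DistinctDists V ∧ ∃ v ∈ V, inDeg k V v = j := by
  classical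
  intro j hj n hn
  have hk0 : 0 < k := hk
  have ht0 : 0 < t := ht
  set i0 : Fin t := ⟨0, ht0⟩ with hi0
  haveI hd : Nontrivial (EuclideanSpace ℝ (Fin d)) := by
    refine ⟨a i0, 0, ?_⟩
    intro h
    have := ha1 i0
    rw [h] at this
    simp at this
  -- margin between distinct directions
  obtain ⟨γ, hγ0, hγ⟩ : ∃ γ : ℝ, 0 < γ ∧ ∀ i i' : Fin t, i ≠ i' → 1 + γ ≤ ‖a i - a i'‖ := by
    set S : Finset (Fin t × Fin t) := Finset.univ.filter (fun q => q.1 ≠ q.2) with hS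
    by_cases hSne : S.Nonempty
    · refine ⟨S.inf' hSne (fun q => ‖a q.1 - a q.2‖ - 1), ?_, ?_⟩
      · rw [Finset.lt_inf'_iff]
        intro q hq
        have hq' : q.1 ≠ q.2 := by simpa [hS] using hq
        have := ha q.1 q.2 hq'
        linarith
      · intro i i' hne
        have hmem : (i, i') ∈ S := by simp [hS, hne]
        have := Finset.inf'_le (fun q => ‖a q.1 - a q.2‖ - 1) hmem
        linarith
    · exact ⟨1, one_pos, fun i i' hne => absurd ⟨(i, i'), by simp [hS, hne]⟩ hSne⟩
  set δ : ℝ := min (1/8) (γ/8) with hδdef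
  have hδ0 : 0 < δ := lt_min (by norm_num) (by linarith)
  have hδ1 : δ ≤ 1/8 := min_le_left _ _
  have hδγ : δ ≤ γ/8 := min_le_right _ _
  rw [show k * (t + 1) = t * k + k from by ring] at hn
  have hjn : j + k + 2 ≤ n := by omega
  have hn0 : 0 < n := by omega
  -- targets
  have hraylt : ∀ m : ℕ, min ((m - 1) / k) (t - 1) < t :=
    fun m => lt_of_le_of_lt (min_le_right _ _) (Nat.sub_lt ht0 one_pos)
  set ray : ℕ → Fin t := fun m => ⟨min ((m - 1) / k) (t - 1), hraylt m⟩ with hray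
  set T : Fin n → EuclideanSpace ℝ (Fin d) :=
    fun i => if i.val = 0 then 0 else if i.val ≤ j then a (ray i.val) else (4 : ℝ) • a i0 with hT
  obtain ⟨p, hp, hinj, hdd⟩ := exists_perturb hδ0 n T
  set P0 : Fin n := ⟨0, hn0⟩ with hP0
  -- ray value for cluster indices
  have hrayval : ∀ m : ℕ, 1 ≤ m → m ≤ j → (ray m).val = (m - 1) / k := by
    intro m h1 h2
    have hlt : (m - 1) / k < t := by
      rw [Nat.div_lt_iff_lt_mul hk0]
      omega
    simp only [hray]
    exact min_eq_left (Nat.le_sub_one_of_lt hlt)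
  -- target formulas
  have hT0 : T P0 = 0 := by simp [hT, hP0]
  have hTc : ∀ i : Fin n, 1 ≤ i.val → i.val ≤ j → T i = a (ray i.val) := by
    intro i h1 h2
    simp only [hT]
    rw [if_neg (by omega), if_pos h2]
  have hTf : ∀ i : Fin n, j < i.val → T i = (4 : ℝ) • a i0 := by
    intro i h
    simp only [hT]
    rw [if_neg (by omega), if_neg (by omega)]
  -- distance comparison with targets
  have hDle : ∀ i i' : Fin n, dist (p i) (p i') < dist (T i) (T i') + 2 * δ := by
    intro i i'
    have h1 := dist_triangle (p i) (T i) (p i')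
    have h2 := dist_triangle (T i) (T i') (p i')
    have h3 := hp i
    have h4 : dist (T i') (p i') < δ := by rw [dist_comm]; exact hp i'
    linarith
  have hDge : ∀ i i' : Fin n, dist (T i) (T i') ≤ dist (p i) (p i') + 2 * δ := by
    intro i i'
    have h1 := dist_triangle (T i) (p i) (T i')
    have h2 := dist_triangle (p i) (p i') (T i')
    have h3 : dist (T i) (p i) < δ := by rw [dist_comm]; exact hp i
    have h4 : dist (p i') (T i') < δ := hp i'
    linarith
  have hn4 : ‖(4 : ℝ) • a i0‖ = 4 := by rw [norm_smul]; simp [ha1 i0]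
  -- concrete bounds
  have b1 : ∀ i : Fin n, 1 ≤ i.val → i.val ≤ j → dist (p P0) (p i) < 1 + 2 * δ := by
    intro i h1 h2
    have := hDle P0 i
    rw [hT0, hTc i h1 h2] at this
    have hdt : dist (0 : EuclideanSpace ℝ (Fin d)) (a (ray i.val)) = 1 := by
      rw [dist_comm, dist_zero_right, ha1]
    rw [hdt] at this
    linarith
  have b3 : ∀ i i' : Fin n, 1 ≤ i.val → i.val ≤ j → j < i'.val →
      3 - 2 * δ ≤ dist (p i') (p i) := by
    intro i i' h1 h2 h3
    have hd := hDge i' i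
    rw [hTf i' h3, hTc i h1 h2] at hd
    have hdt : (3 : ℝ) ≤ dist ((4 : ℝ) • a i0) (a (ray i.val)) := by
      rw [dist_eq_norm]
      have := norm_sub_norm_le ((4 : ℝ) • a i0) (a (ray i.val))
      rw [hn4, ha1] at this
      linarith
    linarith
  have b4 : ∀ i i' : Fin n, 1 ≤ i.val → i.val ≤ j → 1 ≤ i'.val → i'.val ≤ j →
      (i'.val - 1) / k ≠ (i.val - 1) / k → 1 + γ - 2 * δ ≤ dist (p i') (p i) := by
    intro i i' h1 h2 h1' h2' hne
    have hd := hDge i' i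
    rw [hTc i' h1' h2', hTc i h1 h2] at hd
    have hrne : ray i'.val ≠ ray i.val := by
      intro h
      apply hne
      have := congrArg Fin.val h
      rwa [hrayval i'.val h1' h2', hrayval i.val h1 h2] at this
    have hdt : 1 + γ ≤ dist (a (ray i'.val)) (a (ray i.val)) := by
      rw [dist_eq_norm]
      exact hγ _ _ hrne
    linarith
  have b5 : ∀ i i' : Fin n, j < i.val → j < i'.val → dist (p i') (p i) < 2 * δ := by
    intro i i' h h'
    have hd := hDle i' i
    rw [hTf i' h', hTf i h, dist_self] at hd
    linarith
  have b6 : ∀ i : Fin n, j < i.val → 4 - 2 * δ ≤ dist (p P0) (p i) := by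
    intro i h
    have hd := hDge P0 i
    rw [hT0, hTf i h] at hd
    have hdt : dist (0 : EuclideanSpace ℝ (Fin d)) ((4 : ℝ) • a i0) = 4 := by
      rw [dist_comm, dist_zero_right, hn4]
    linarith [hd, hdt.ge]
  -- clusters are k-nearest-neighbors of the center
  have hclus : ∀ i : Fin n, 1 ≤ i.val → i.val ≤ j →
      IsKNNOf k (Set.range p) (p P0) (p i) := by
    intro i h1 h2
    refine ⟨⟨P0, rfl⟩, ?_, ?_⟩
    · intro h
      have h' := congrArg Fin.val (hinj h)
      have : (0 : ℕ) = i.val := h'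
      omega
    · have hsub : {w | w ∈ Set.range p ∧ w ≠ p i ∧ dist w (p i) < dist (p P0) (p i)} ⊆
          p '' {i' : Fin n | 1 ≤ i'.val ∧ i'.val ≤ j ∧
            (i'.val - 1) / k = (i.val - 1) / k ∧ i' ≠ i} := by
        rintro w ⟨⟨i', rfl⟩, hne, hlt⟩
        refine ⟨i', ?_, rfl⟩
        have hne' : i' ≠ i := fun h => hne (congrArg p h)
        have h0 : i'.val ≠ 0 := by
          intro h0
          have : i' = P0 := Fin.ext h0
          rw [this] at hlt
          exact lt_irrefl _ hlt
        have hcl : i'.val ≤ j := by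
          by_contra hgt
          push_neg at hgt
          have := b3 i i' h1 h2 hgt
          have := b1 i h1 h2
          linarith
        have hre : (i'.val - 1) / k = (i.val - 1) / k := by
          by_contra hne2
          have := b4 i i' h1 h2 (by omega) hcl hne2
          have := b1 i h1 h2
          linarith
        exact ⟨by omega, hcl, hre, hne'⟩
      set q : ℕ := (i.val - 1) / k with hq
      have himem : i.val ∈ Finset.Icc (k * q + 1) (k * q + k) := by
        have hdm := Nat.div_add_mod (i.val - 1) k
        have hmod := Nat.mod_lt (i.val - 1) hk0
        rw [← hq] at hdm
        simp only [Finset.mem_Icc]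
        omega
      have hFsub : Fin.val '' {i' : Fin n | 1 ≤ i'.val ∧ i'.val ≤ j ∧
            (i'.val - 1) / k = (i.val - 1) / k ∧ i' ≠ i} ⊆
          ↑((Finset.Icc (k * q + 1) (k * q + k)).erase i.val) := by
        rintro m ⟨i', ⟨ha1', ha2', ha3', ha4'⟩, rfl⟩
        have hdm := Nat.div_add_mod (i'.val - 1) k
        have hmod := Nat.mod_lt (i'.val - 1) hk0
        rw [ha3', ← hq] at hdm
        simp only [Finset.coe_erase, Set.mem_diff, Finset.coe_Icc, Set.mem_Icc,
          Set.mem_singleton_iff]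
        constructor
        · omega
        · intro h
          exact ha4' (Fin.ext h)
      calc {w | w ∈ Set.range p ∧ w ≠ p i ∧ dist w (p i) < dist (p P0) (p i)}.ncard
          ≤ (p '' {i' : Fin n | 1 ≤ i'.val ∧ i'.val ≤ j ∧
              (i'.val - 1) / k = (i.val - 1) / k ∧ i' ≠ i}).ncard :=
            Set.ncard_le_ncard hsub ((Set.toFinite _).image p)
        _ = {i' : Fin n | 1 ≤ i'.val ∧ i'.val ≤ j ∧
              (i'.val - 1) / k = (i.val - 1) / k ∧ i' ≠ i}.ncard :=
            Set.ncard_image_of_injective _ hinj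
        _ ≤ ((Finset.Icc (k * q + 1) (k * q + k)).erase i.val).card :=
            ncard_le_of_val_image_subset _ _ hFsub
        _ < k := by
            rw [Finset.card_erase_of_mem himem, Nat.card_Icc]
            omega
  -- fillers do not have the center among their k nearest neighbors
  have hfill : ∀ i : Fin n, j < i.val → ¬ IsKNNOf k (Set.range p) (p P0) (p i) := by
    intro i hi hknn
    obtain ⟨-, -, hcount⟩ := hknn
    have hsub : p '' {i' : Fin n | j < i'.val ∧ i' ≠ i} ⊆
        {w | w ∈ Set.range p ∧ w ≠ p i ∧ dist w (p i) < dist (p P0) (p i)} := by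
      rintro w ⟨i', ⟨h1', h2'⟩, rfl⟩
      refine ⟨⟨i', rfl⟩, fun h => h2' (hinj h), ?_⟩
      have hb5 := b5 i i' hi h1'
      have hb6 := b6 i hi
      linarith
    have hFeq : Fin.val '' {i' : Fin n | j < i'.val ∧ i' ≠ i} =
        ↑((Finset.Ico (j + 1) n).erase i.val) := by
      ext m
      simp only [Set.mem_image, Set.mem_setOf_eq, Finset.coe_erase, Set.mem_diff,
        Finset.coe_Ico, Set.mem_Ico, Set.mem_singleton_iff]
      constructor
      · rintro ⟨i', ⟨h1', h2'⟩, rfl⟩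
        exact ⟨⟨by omega, i'.isLt⟩, fun h => h2' (Fin.ext h)⟩
      · rintro ⟨⟨h1', h2'⟩, h3'⟩
        exact ⟨⟨m, h2'⟩, ⟨h1', fun h => h3' (congrArg Fin.val h)⟩, rfl⟩
    have hk' : k ≤ {i' : Fin n | j < i'.val ∧ i' ≠ i}.ncard := by
      rw [ncard_eq_of_val_image _ _ hFeq, Finset.card_erase_of_mem
        (by simp only [Finset.mem_Ico]; omega), Nat.card_Ico]
      omega
    have : k ≤ {w | w ∈ Set.range p ∧ w ≠ p i ∧ dist w (p i) < dist (p P0) (p i)}.ncard := by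
      refine le_trans ?_ (Set.ncard_le_ncard hsub ((Set.finite_range p).subset
        (fun w hw => hw.1)))
      rwa [Set.ncard_image_of_injective _ hinj]
    omega
  -- the indegree set
  have hA : {u | u ∈ Set.range p ∧ IsKNNOf k (Set.range p) (p P0) u} =
      p '' {i : Fin n | 1 ≤ i.val ∧ i.val ≤ j} := by
    ext u
    constructor
    · rintro ⟨⟨i, rfl⟩, hknn⟩
      refine ⟨i, ⟨?_, ?_⟩, rfl⟩
      · by_contra h0
        push_neg at h0
        have hiv : i.val = 0 := by omega
        have : i = P0 := Fin.ext hiv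
        rw [this] at hknn
        exact hknn.2.1 rfl
      · by_contra h
        push_neg at h
        exact hfill i h hknn
    · rintro ⟨i, ⟨h1, h2⟩, rfl⟩
      exact ⟨⟨i, rfl⟩, hclus i h1 h2⟩
  have hcount : {i : Fin n | 1 ≤ i.val ∧ i.val ≤ j}.ncard = j := by
    have hFeq : Fin.val '' {i : Fin n | 1 ≤ i.val ∧ i.val ≤ j} = ↑(Finset.Icc 1 j) := by
      ext m
      simp only [Set.mem_image, Set.mem_setOf_eq, Finset.coe_Icc, Set.mem_Icc]
      constructor
      · rintro ⟨i, ⟨h1, h2⟩, rfl⟩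
        exact ⟨h1, h2⟩
      · rintro ⟨h1, h2⟩
        exact ⟨⟨m, by omega⟩, ⟨h1, h2⟩, rfl⟩
    rw [ncard_eq_of_val_image _ _ hFeq, Nat.card_Icc]
    omega
  have hcard : (Set.range p).ncard = n := by
    rw [← Set.image_univ, Set.ncard_image_of_injective _ hinj, Set.ncard_univ,
      Nat.card_eq_fintype_card, Fintype.card_fin]
  refine ⟨Set.range p, Set.finite_range p, hcard, hdd, p P0, ⟨P0, rfl⟩, ?_⟩
  rw [inDeg, hA, Set.ncard_image_of_injective _ hinj, hcount]
end

section
/- Let V be a finite set of at least two points in ℝ^d in which all pairwise distances between distinct points are distinct, and let G be the underlying graph of the 1-nearest-neighbor digraph of V (vertices V, with u and v adjacent iff NN(u) = v or NN(v) = u). Then every connected component of G contains exactly one reflexive pair, i.e., exactly one unordered pair {u, v} with NN(u) = v and NN(v) = u. -/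
/-- `IsNN V v u` : `u` is the (unique) nearest neighbor of `v` in `V`, i.e. `NN(v) = u`. -/
def IsNN {d : ℕ} (V : Set (EuclideanSpace ℝ (Fin d))) (v u : EuclideanSpace ℝ (Fin d)) : Prop :=
  u ∈ V ∧ u ≠ v ∧ ∀ w ∈ V, w ≠ v → w ≠ u → dist v u < dist v w

/-- The underlying graph of the 1-nearest-neighbor digraph of `V`: vertices are the points of
`V`, and `u`, `v` are adjacent iff `NN(u) = v` or `NN(v) = u`. -/
def nnGraph {d : ℕ} (V : Set (EuclideanSpace ℝ (Fin d))) : SimpleGraph V where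
  Adj a b := IsNN V a.1 b.1 ∨ IsNN V b.1 a.1
  symm := ⟨fun a b h => Or.symm h⟩
  loopless := ⟨fun a h => by
    rcases h with h | h <;> exact h.2.1 rfl⟩

lemma isNN_unique {d : ℕ} {V : Set (EuclideanSpace ℝ (Fin d))} {a b c : EuclideanSpace ℝ (Fin d)}
    (hb : IsNN V a b) (hc : IsNN V a c) : b = c := by
  by_contra h
  have h1 := hb.2.2 c hc.1 hc.2.1 (fun e => h e.symm)
  have h2 := hc.2.2 b hb.1 hb.2.1 h
  linarith

lemma exists_isNN {d : ℕ} {V : Set (EuclideanSpace ℝ (Fin d))} (hfin : V.Finite)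
    (h2 : 2 ≤ V.ncard) (hdist : DistinctDists V) {v : EuclideanSpace ℝ (Fin d)} (hv : v ∈ V) :
    ∃ u, IsNN V v u := by
  obtain ⟨u0, hu0, hne0⟩ := Set.exists_ne_of_one_lt_ncard (s := V) (by omega) v
  obtain ⟨u, hu, hmin⟩ := Set.exists_min_image (V \ {v}) (dist v)
    (hfin.subset Set.diff_subset) ⟨u0, hu0, hne0⟩
  refine ⟨u, hu.1, hu.2, fun w hw hwv hwu => ?_⟩
  have hle := hmin w ⟨hw, hwv⟩
  rcases lt_or_eq_of_le hle with h | h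
  · exact h
  · rcases hdist v u v w hv hu.1 hv hw (fun e => hu.2 e.symm) (fun e => hwv e.symm) h with
      ⟨_, h2'⟩ | ⟨h1', _⟩
    · exact absurd h2'.symm hwu
    · exact absurd h1'.symm hwv

lemma reach_aux {d : ℕ} {V : Set (EuclideanSpace ℝ (Fin d))} (nn : V → V)
    (hedge : ∀ a b : V, (nnGraph V).Adj a b → nn a = b ∨ nn b = a)
    {u v : V} (huv : nn u = v) (hvu : nn v = u) :
    ∀ {x y : V}, (nnGraph V).Walk x y →
      (∃ n, nn^[n] x = u ∨ nn^[n] x = v) → (∃ n, nn^[n] y = u ∨ nn^[n] y = v) := by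
  intro x y p
  induction p with
  | nil => exact id
  | @cons a b _ h p ih =>
    intro hx
    apply ih
    rcases hedge a b h with hab | hba
    · obtain ⟨n, hn⟩ := hx
      cases n with
      | zero =>
        refine ⟨0, ?_⟩
        simp only [Function.iterate_zero, id] at hn ⊢
        rcases hn with rfl | rfl
        · right; rw [← hab, huv]
        · left; rw [← hab, hvu]
      | succ k =>
        refine ⟨k, ?_⟩
        rwa [Function.iterate_succ_apply, hab] at hn
    · obtain ⟨n, hn⟩ := hx
      refine ⟨n + 1, ?_⟩
      rwa [Function.iterate_succ_apply, hba]

/-- Every connected component of the underlying graph of the 1NN digraph contains exactly one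
reflexive pair. -/
theorem component_unique_reflexive_pair (d : ℕ)
    (V : Set (EuclideanSpace ℝ (Fin d))) (hfin : V.Finite) (h2 : 2 ≤ V.ncard)
    (hdist : DistinctDists V) (c : (nnGraph V).ConnectedComponent) :
    ∃! p : Sym2 V, ∃ u v : V, p = Sym2.mk u v ∧ u ≠ v ∧
      IsNN V u.1 v.1 ∧ IsNN V v.1 u.1 ∧ (nnGraph V).connectedComponentMk u = c := by
  haveI : Finite V := hfin.to_subtype
  -- the nearest neighbor function
  have hex : ∀ x : V, ∃ y : V, IsNN V x.1 y.1 := by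
    intro x
    obtain ⟨y, hy⟩ := exists_isNN hfin h2 hdist x.2
    exact ⟨⟨y, hy.1⟩, hy⟩
  choose nn hnn using hex
  have hnnu : ∀ (x : V) (y : V), IsNN V x.1 y.1 → nn x = y := by
    intro x y h
    exact Subtype.ext (isNN_unique (hnn x) h)
  have hedge : ∀ a b : V, (nnGraph V).Adj a b → nn a = b ∨ nn b = a := by
    intro a b h
    rcases h with h | h
    · exact Or.inl (hnnu a b h)
    · exact Or.inr (hnnu b a h)
  have hadj : ∀ x : V, (nnGraph V).Adj x (nn x) := fun x => Or.inl (hnn x)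
  -- existence: minimize dist to nearest neighbor over the component
  set S : Set V := {x : V | (nnGraph V).connectedComponentMk x = c} with hS
  obtain ⟨x0, hx0⟩ := c.exists_rep
  obtain ⟨u, huS, hmin⟩ := Set.exists_min_image S (fun x => dist x.1 (nn x).1)
    (Set.toFinite S) ⟨x0, hx0⟩
  set v := nn u with hv
  have hvS : v ∈ S := by
    have : (nnGraph V).connectedComponentMk v = (nnGraph V).connectedComponentMk u :=
      SimpleGraph.ConnectedComponent.connectedComponentMk_eq_of_adj (hadj u).symm
    rw [hS, Set.mem_setOf_eq, this]; exact huS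
  have hvu : nn v = u := by
    by_contra hne
    have hIu := hnn u
    have hIv := hnn v
    have hune : u.1 ≠ v.1 := fun e => hIu.2.1 e.symm
    have h1 : dist v.1 (nn v).1 < dist v.1 u.1 := by
      refine hIv.2.2 u.1 u.2 hune (fun e => hne (Subtype.ext e.symm))
    have h2 : dist u.1 v.1 ≤ dist v.1 (nn v).1 := by
      have := hmin v hvS
      rw [dist_comm] at h1
      calc dist u.1 v.1 = dist u.1 (nn u).1 := rfl
        _ ≤ dist v.1 (nn v).1 := this
    rw [dist_comm u.1 v.1] at h2
    linarith
  have hIuv : IsNN V u.1 v.1 := hnn u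
  have hIvu : IsNN V v.1 u.1 := by rw [← hvu]; exact hnn v
  refine ⟨Sym2.mk u v, ⟨u, v, rfl, fun e => hIuv.2.1 (congrArg Subtype.val e.symm), hIuv,
    hIvu, huS⟩, ?_⟩
  rintro q ⟨u', v', rfl, hne', h1', h2', hc'⟩
  have huv' : nn u' = v' := hnnu u' v' h1'
  have hvu' : nn v' = u' := hnnu v' u' h2'
  -- alternation of iterates on the reflexive pair (u', v')
  have halt : ∀ n, nn^[n] u' = u' ∨ nn^[n] u' = v' := by
    intro n
    induction n with
    | zero => exact Or.inl rfl
    | succ k ih =>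
      rw [Function.iterate_succ_apply']
      rcases ih with h | h
      · rw [h, huv']; exact Or.inr rfl
      · rw [h, hvu']; exact Or.inl rfl
  have hreach : (nnGraph V).Reachable u u' :=
    SimpleGraph.ConnectedComponent.exact (huS.trans hc'.symm)
  obtain ⟨p⟩ := hreach
  obtain ⟨n, hn⟩ := reach_aux nn hedge hv.symm hvu p ⟨0, Or.inl rfl⟩
  have key : (u' = u ∨ u' = v) ∨ (v' = u ∨ v' = v) := by
    rcases halt n with h | h
    · rcases hn with h' | h'
      · exact Or.inl (Or.inl (h.symm.trans h'))
      · exact Or.inl (Or.inr (h.symm.trans h'))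
    · rcases hn with h' | h'
      · exact Or.inr (Or.inl (h.symm.trans h'))
      · exact Or.inr (Or.inr (h.symm.trans h'))
  rcases key with (rfl | rfl) | (rfl | rfl)
  · rw [← huv', hv]
  · rw [← huv', hvu, Sym2.eq_swap]
  · rw [← hvu', hv, Sym2.eq_swap]
  · rw [← hvu', hvu]
end

section
/- Let V be a finite set of at least two points in ℝ^d in which all pairwise distances between distinct points are distinct, and let G be the underlying graph of the 1-nearest-neighbor digraph of V. Then the number of connected components of G equals R^{(1)}(V), the number of reflexive pairs of V. -/
open Classical in
noncomputable def pairOfAux {α : Type*} (f : α → α) (rk : α → ℕ)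
    (hrk : ∀ a, f (f a) ≠ a → rk (f a) < rk a) (a : α) : Sym2 α :=
  if h : f (f a) = a then s(a, f a) else pairOfAux f rk hrk (f a)
termination_by rk a
decreasing_by exact hrk a h

theorem pairOfAux_fix {α : Type*} (f : α → α) (rk : α → ℕ)
    (hrk : ∀ a, f (f a) ≠ a → rk (f a) < rk a) (a : α) (h : f (f a) = a) :
    pairOfAux f rk hrk a = s(a, f a) := by
  rw [pairOfAux, dif_pos h]

theorem pairOfAux_apply_f {α : Type*} (f : α → α) (rk : α → ℕ)
    (hrk : ∀ a, f (f a) ≠ a → rk (f a) < rk a) (a : α) :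
    pairOfAux f rk hrk (f a) = pairOfAux f rk hrk a := by
  by_cases h : f (f a) = a
  · rw [pairOfAux_fix f rk hrk a h, pairOfAux_fix f rk hrk (f a) (congrArg f h), h,
      Sym2.eq_swap]
  · conv_rhs => rw [pairOfAux, dif_neg h]

theorem pairOfAux_spec {α : Type*} (f : α → α) (rk : α → ℕ)
    (hrk : ∀ a, f (f a) ≠ a → rk (f a) < rk a) (a : α) :
    ∃ b, pairOfAux f rk hrk a = s(b, f b) ∧ f (f b) = b ∧
      Relation.ReflTransGen (fun x y => y = f x) a b := by
  by_cases h : f (f a) = a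
  · exact ⟨a, pairOfAux_fix f rk hrk a h, h, Relation.ReflTransGen.refl⟩
  · obtain ⟨b, h1, h2, h3⟩ := pairOfAux_spec f rk hrk (f a)
    exact ⟨b, by rw [← pairOfAux_apply_f f rk hrk a]; exact h1, h2,
      Relation.ReflTransGen.head rfl h3⟩
termination_by rk a
decreasing_by exact hrk a h

/-- `R^{(1)}(V)`: the number of reflexive nearest-neighbor pairs of `V`. -/
noncomputable def reflCount {d : ℕ} (V : Set (EuclideanSpace ℝ (Fin d))) : ℕ :=
  {p : Sym2 (EuclideanSpace ℝ (Fin d)) | ∃ u v, p = s(u, v) ∧ u ≠ v ∧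
    u ∈ V ∧ v ∈ V ∧ IsNN V u v ∧ IsNN V v u}.ncard

/-- The number of connected components of the underlying graph of the 1NN digraph of `V`
equals the number of reflexive pairs of `V`. -/
theorem card_components_eq_reflCount (d : ℕ)
    (V : Set (EuclideanSpace ℝ (Fin d))) (hfin : V.Finite) (h2 : 2 ≤ V.ncard)
    (hdist : DistinctDists V) :
    Nat.card ((nnGraph V).ConnectedComponent) = reflCount V := by
  classical
  haveI : Finite ↥V := hfin.to_subtype
  -- existence of nearest neighbors
  have hex : ∀ a : ↥V, ∃ u : ↥V, IsNN V a.1 u.1 := by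
    rintro ⟨v, hv⟩
    have hne : (hfin.toFinset.erase v).Nonempty := by
      rw [← Finset.card_pos, Finset.card_erase_of_mem (hfin.mem_toFinset.2 hv)]
      have hc : hfin.toFinset.card = V.ncard := (Set.ncard_eq_toFinset_card V hfin).symm
      omega
    obtain ⟨u, hu, hmin⟩ := Finset.exists_min_image _ (dist v) hne
    have huV : u ∈ V := hfin.mem_toFinset.1 (Finset.mem_of_mem_erase hu)
    have huv : u ≠ v := Finset.ne_of_mem_erase hu
    refine ⟨⟨u, huV⟩, huV, huv, ?_⟩
    intro w hw hwv hwu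
    rcases lt_or_eq_of_le (hmin w (Finset.mem_erase.2 ⟨hwv, hfin.mem_toFinset.2 hw⟩)) with h | h
    · exact h
    · exfalso
      rcases hdist v u v w hv huV hv hw huv.symm (Ne.symm hwv) h with ⟨_, h2'⟩ | ⟨h1', _⟩
      · exact hwu h2'.symm
      · exact hwv h1'.symm
  -- uniqueness of nearest neighbors
  have huniq : ∀ (v u u' : EuclideanSpace ℝ (Fin d)), IsNN V v u → IsNN V v u' → u = u' := by
    intro v u u' h h'
    by_contra hne
    have h1 := h.2.2 u' h'.1 h'.2.1 (fun e => hne e.symm)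
    have h2' := h'.2.2 u h.1 h.2.1 hne
    linarith
  choose f hspec using hex
  have hfne : ∀ a, f a ≠ a := fun a h => (hspec a).2.1 (congrArg Subtype.val h)
  have hadj : ∀ a, (nnGraph V).Adj a (f a) := fun a => Or.inl (hspec a)
  have hadj_iff : ∀ a b, (nnGraph V).Adj a b ↔ f a = b ∨ f b = a := by
    intro a b
    constructor
    · rintro (h | h)
      · exact Or.inl (Subtype.ext (huniq a.1 _ _ (hspec a) h))
      · exact Or.inr (Subtype.ext (huniq b.1 _ _ (hspec b) h))
    · rintro (rfl | rfl)
      · exact hadj a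
      · exact (hadj b).symm
  -- the decreasing measure
  set D : ↥V → ℝ := fun a => dist a.1 (f a).1 with hD
  have hDlt : ∀ a, f (f a) ≠ a → D (f a) < D a := by
    intro a h
    have h1 : a.1 ≠ (f a).1 := fun e => hfne a (Subtype.ext e.symm)
    have h2' : a.1 ≠ (f (f a)).1 := fun e => h (Subtype.ext e.symm)
    have := (hspec (f a)).2.2 a.1 a.2 h1 h2'
    calc D (f a) = dist (f a).1 (f (f a)).1 := rfl
      _ < dist (f a).1 a.1 := this
      _ = D a := dist_comm _ _
  set rk : ↥V → ℕ := fun a => {b | D b < D a}.ncard with hrkdef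
  have hrkd : ∀ a, f (f a) ≠ a → rk (f a) < rk a := by
    intro a h
    apply Set.ncard_lt_ncard _ (Set.toFinite _)
    constructor
    · exact fun b hb => lt_trans hb (hDlt a h)
    · intro hsub
      exact lt_irrefl _ (show D (f a) < D (f a) from hsub (hDlt a h))
  -- constancy of the terminal pair on edges
  have hconst : ∀ a b, (nnGraph V).Adj a b →
      Sym2.map Subtype.val (pairOfAux f rk hrkd a)
        = Sym2.map Subtype.val (pairOfAux f rk hrkd b) := by
    intro a b hab
    rcases (hadj_iff a b).1 hab with rfl | rfl
    · rw [pairOfAux_apply_f]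
    · rw [pairOfAux_apply_f]
  have hwalk : ∀ (v w : ↥V), (nnGraph V).Walk v w →
      Sym2.map Subtype.val (pairOfAux f rk hrkd v)
        = Sym2.map Subtype.val (pairOfAux f rk hrkd w) := by
    intro v w p
    induction p with
    | nil => rfl
    | cons h _ ih => exact (hconst _ _ h).trans ih
  set Φ : (nnGraph V).ConnectedComponent → Sym2 (EuclideanSpace ℝ (Fin d)) :=
    SimpleGraph.ConnectedComponent.lift
      (fun a => Sym2.map Subtype.val (pairOfAux f rk hrkd a))
      (fun v w p _ => hwalk v w p) with hΦ
  have hΦmk : ∀ a : ↥V, Φ (SimpleGraph.connectedComponentMk (nnGraph V) a)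
      = Sym2.map Subtype.val (pairOfAux f rk hrkd a) := fun a => rfl
  have hreach : ∀ a b : ↥V, Relation.ReflTransGen (fun x y => y = f x) a b →
      (nnGraph V).Reachable a b := by
    intro a b h
    induction h with
    | refl => exact SimpleGraph.Reachable.refl a
    | tail _ hstep ih =>
      subst hstep
      exact ih.trans (hadj _).reachable
  set S := {p : Sym2 (EuclideanSpace ℝ (Fin d)) | ∃ u v, p = s(u, v) ∧ u ≠ v ∧
    u ∈ V ∧ v ∈ V ∧ IsNN V u v ∧ IsNN V v u} with hS
  have hmem : ∀ C, Φ C ∈ S := by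
    intro C
    obtain ⟨a, rfl⟩ := C.exists_rep
    obtain ⟨b, h1, h2', _⟩ := pairOfAux_spec f rk hrkd a
    refine ⟨b.1, (f b).1, ?_, fun e => hfne b (Subtype.ext e.symm), b.2, (f b).2, hspec b, ?_⟩
    · show Φ (SimpleGraph.connectedComponentMk _ a) = _
      rw [hΦmk, h1]
      rfl
    · have := hspec (f b)
      rwa [h2'] at this
  set e : (nnGraph V).ConnectedComponent → ↥S := fun C => ⟨Φ C, hmem C⟩ with he
  have hinj : Function.Injective e := by
    intro C1 C2 hC
    obtain ⟨a1, rfl⟩ := C1.exists_rep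
    obtain ⟨a2, rfl⟩ := C2.exists_rep
    obtain ⟨b1, h11, h12, h13⟩ := pairOfAux_spec f rk hrkd a1
    obtain ⟨b2, h21, h22, h23⟩ := pairOfAux_spec f rk hrkd a2
    have hΦeq : Sym2.map Subtype.val (s(b1, f b1))
        = Sym2.map Subtype.val (s(b2, f b2)) := by
      have h : Φ (SimpleGraph.connectedComponentMk (nnGraph V) a1)
          = Φ (SimpleGraph.connectedComponentMk (nnGraph V) a2) := Subtype.ext_iff.mp hC
      rwa [hΦmk, hΦmk, h11, h21] at h
    have hb : s(b1, f b1) = s(b2, f b2) :=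
      Sym2.map.injective Subtype.val_injective hΦeq
    have hr1 : (nnGraph V).Reachable a1 b1 := hreach _ _ h13
    have hr2 : (nnGraph V).Reachable a2 b2 := hreach _ _ h23
    rcases Sym2.eq_iff.1 hb with ⟨hx, _⟩ | ⟨hx, hy⟩
    · calc SimpleGraph.connectedComponentMk _ a1
          = SimpleGraph.connectedComponentMk _ b1 := SimpleGraph.ConnectedComponent.sound hr1
        _ = SimpleGraph.connectedComponentMk _ b2 := by rw [hx]
        _ = SimpleGraph.connectedComponentMk _ a2 :=
            (SimpleGraph.ConnectedComponent.sound hr2).symm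
    · calc SimpleGraph.connectedComponentMk _ a1
          = SimpleGraph.connectedComponentMk _ b1 := SimpleGraph.ConnectedComponent.sound hr1
        _ = SimpleGraph.connectedComponentMk _ b2 := by
            rw [hx]
            exact SimpleGraph.ConnectedComponent.sound ((hadj b2).reachable.symm)
        _ = SimpleGraph.connectedComponentMk _ a2 :=
            (SimpleGraph.ConnectedComponent.sound hr2).symm
  have hsurj : Function.Surjective e := by
    rintro ⟨p, hp⟩
    obtain ⟨u, v, rfl, hne, hu, hv, h1, h2'⟩ := hp
    set a : ↥V := ⟨u, hu⟩ with ha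
    set b : ↥V := ⟨v, hv⟩ with hb
    have hfa : f a = b := Subtype.ext (huniq u _ _ (hspec a) h1)
    have hfb : f b = a := Subtype.ext (huniq v _ _ (hspec b) h2')
    have hfix : f (f a) = a := by rw [hfa, hfb]
    refine ⟨SimpleGraph.connectedComponentMk _ a, ?_⟩
    apply Subtype.ext
    show Φ (SimpleGraph.connectedComponentMk _ a) = s(u, v)
    rw [hΦmk, pairOfAux_fix f rk hrkd a hfix, hfa]
    rfl
  have hcard : Nat.card ((nnGraph V).ConnectedComponent) = Nat.card ↥S :=
    Nat.card_congr (Equiv.ofBijective e ⟨hinj, hsurj⟩)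
  rw [hcard, reflCount, ← hS]
  exact Nat.card_coe_set_eq S
end

section
/- Let a and b be integers with 1 ≤ b < a, and let V be a finite set of n points in ℝ^d in which all pairwise distances between distinct points are distinct. If n ≥ 2a + 14, then it is not possible that simultaneously Q_a^{(1)}(V) ≥ ⌊n/(a+1)⌋ and Q_b^{(1)}(V) ≥ ⌊n/(b+1)⌋; i.e., the 1NN digraph of V cannot have at least ⌊n/(a+1)⌋ vertices of indegree a and at least ⌊n/(b+1)⌋ vertices of indegree b. -/
/-- The indegree of `v` in the 1NN digraph of `V`: the number of `u ∈ V` with `NN(u) = v`. -/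
noncomputable def inDeg1 {d : ℕ} (V : Set (EuclideanSpace ℝ (Fin d)))
    (v : EuclideanSpace ℝ (Fin d)) : ℕ :=
  {u | u ∈ V ∧ IsNN V u v}.ncard

/-- `Q_j^{(1)}(V)`: the number of points of `V` with indegree exactly `j` in the 1NN digraph. -/
noncomputable def Q1j {d : ℕ} (V : Set (EuclideanSpace ℝ (Fin d))) (j : ℕ) : ℕ :=
  {v | v ∈ V ∧ inDeg1 V v = j}.ncard

set_option maxHeartbeats 1000000 in
/-- For `1 ≤ b < a` and `n ≥ 2a + 14`, the 1NN digraph of an `n`-point set cannot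
simultaneously have at least `⌊n/(a+1)⌋` vertices of indegree `a` and at least `⌊n/(b+1)⌋`
vertices of indegree `b`. -/
theorem not_both_many_indegrees (d a b n : ℕ) (hb : 1 ≤ b) (hba : b < a)
    (V : Set (EuclideanSpace ℝ (Fin d))) (hfin : V.Finite) (hcard : V.ncard = n)
    (hdist : DistinctDists V) (hn : 2 * a + 14 ≤ n) :
    ¬ (n / (a + 1) ≤ Q1j V a ∧ n / (b + 1) ≤ Q1j V b) := by
  classical
  rintro ⟨hQa, hQb⟩
  set S := hfin.toFinset with hSdef
  have hmemS : ∀ x, x ∈ S ↔ x ∈ V := fun x => hfin.mem_toFinset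
  have hcardS : S.card = n := by
    rw [← hcard, Set.ncard_eq_toFinset_card _ hfin]
  -- every point has a unique nearest neighbor
  have huniq : ∀ u ∈ S, ∃! v, IsNN V u v := by
    intro u hu
    have hne : (S.erase u).Nonempty := by
      rw [← Finset.card_pos, Finset.card_erase_of_mem hu, hcardS]
      omega
    obtain ⟨v, hv, hmin⟩ := (S.erase u).exists_min_image (fun w => dist u w) hne
    have hvu : v ≠ u := Finset.ne_of_mem_erase hv
    have hvS : v ∈ S := Finset.mem_of_mem_erase hv
    have hNN : IsNN V u v := by
      refine ⟨(hmemS v).1 hvS, hvu, fun w hw hwu hwv => ?_⟩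
      have hwe : w ∈ S.erase u := Finset.mem_erase.2 ⟨hwu, (hmemS w).2 hw⟩
      refine lt_of_le_of_ne (hmin w hwe) fun he => ?_
      rcases hdist u v u w ((hmemS u).1 hu) ((hmemS v).1 hvS) ((hmemS u).1 hu) hw
        (Ne.symm hvu) (Ne.symm hwu) he with ⟨_, h2⟩ | ⟨h1, _⟩
      · exact hwv h2.symm
      · exact hwu h1.symm
    refine ⟨v, hNN, fun v' hv' => ?_⟩
    by_contra hne'
    have h1 : dist u v' < dist u v := hv'.2.2 v ((hmemS v).1 hvS) hvu (fun h => hne' h.symm)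
    have h2 : dist u v < dist u v' :=
      hNN.2.2 v' hv'.1 hv'.2.1 hne'
    linarith
  -- sum of indegrees equals n
  have hdeg : ∀ v, inDeg1 V v = (S.filter fun u => IsNN V u v).card := by
    intro v
    rw [inDeg1, ← Set.ncard_coe_finset]
    congr 1
    ext u
    simp [hmemS]
  have hinner : ∀ u ∈ S, (S.filter fun v => IsNN V u v).card = 1 := by
    intro u hu
    obtain ⟨v, hv, hv'⟩ := huniq u hu
    rw [Finset.card_eq_one]
    refine ⟨v, ?_⟩
    ext w
    simp only [Finset.mem_filter, Finset.mem_singleton]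
    constructor
    · rintro ⟨_, hw⟩; exact hv' w hw
    · rintro rfl; exact ⟨(hmemS w).2 hv.1, hv⟩
  have hsum : ∑ v ∈ S, inDeg1 V v = n := by
    calc ∑ v ∈ S, inDeg1 V v
        = ∑ v ∈ S, ∑ u ∈ S, (if IsNN V u v then 1 else 0) := by
          simp only [hdeg, Finset.card_filter]
      _ = ∑ u ∈ S, ∑ v ∈ S, (if IsNN V u v then 1 else 0) := Finset.sum_comm
      _ = ∑ u ∈ S, (S.filter fun v => IsNN V u v).card := by
          simp only [Finset.card_filter]
      _ = ∑ u ∈ S, 1 := Finset.sum_congr rfl hinner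
      _ = n := by simp [hcardS]
  -- Q1j as finset cards
  have hQ : ∀ j, Q1j V j = (S.filter fun v => inDeg1 V v = j).card := by
    intro j
    rw [Q1j, ← Set.ncard_coe_finset]
    congr 1
    ext v
    simp [hmemS]
  -- a * Qa + b * Qb ≤ n
  set Ta := S.filter fun v => inDeg1 V v = a with hTa
  set Tb := S.filter fun v => inDeg1 V v = b with hTb
  have hdisj : Disjoint Ta Tb := by
    rw [Finset.disjoint_left]
    intro v hva hvb
    rw [hTa, Finset.mem_filter] at hva
    rw [hTb, Finset.mem_filter] at hvb
    omega
  have hunion : Ta ∪ Tb ⊆ S := Finset.union_subset (Finset.filter_subset _ _)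
    (Finset.filter_subset _ _)
  have hmain : a * Q1j V a + b * Q1j V b ≤ n := by
    rw [hQ a, hQ b, ← hTa, ← hTb, ← hsum]
    calc a * Ta.card + b * Tb.card
        = ∑ v ∈ Ta, inDeg1 V v + ∑ v ∈ Tb, inDeg1 V v := by
          rw [Finset.sum_congr rfl (fun v hv => (Finset.mem_filter.1 hv).2),
            Finset.sum_congr rfl (fun v hv => (Finset.mem_filter.1 hv).2)]
          simp [mul_comm]
          rfl
      _ = ∑ v ∈ Ta ∪ Tb, inDeg1 V v := (Finset.sum_union hdisj).symm
      _ ≤ ∑ v ∈ S, inDeg1 V v := Finset.sum_le_sum_of_subset hunion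
  -- arithmetic contradiction
  have hda : n < (a + 1) * (n / (a + 1)) + (a + 1) := by
    have h1 := Nat.div_add_mod n (a + 1)
    have h2 := Nat.mod_lt n (show 0 < a + 1 by omega)
    omega
  have hdb : n < (b + 1) * (n / (b + 1)) + (b + 1) := by
    have h1 := Nat.div_add_mod n (b + 1)
    have h2 := Nat.mod_lt n (show 0 < b + 1 by omega)
    omega
  have hQab : a * (n / (a + 1)) + b * (n / (b + 1)) ≤ n := by
    calc a * (n / (a + 1)) + b * (n / (b + 1)) ≤ a * Q1j V a + b * Q1j V b :=
          Nat.add_le_add (Nat.mul_le_mul_left a hQa) (Nat.mul_le_mul_left b hQb)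
      _ ≤ n := hmain
  -- pass to integers
  have key : ∀ A B N : ℤ, 1 ≤ B → B + 1 ≤ A → 2 * A + 14 ≤ N →
      N + A * A * (B + 1) + B * B * (A + 1) + (A + 1) * (B + 1) ≤ N * (A * B) := by
    intro A B N hB hBA hN
    have hab : (1:ℤ) ≤ A * B := by nlinarith
    nlinarith [mul_nonneg (sub_nonneg.2 hB) (by linarith : (0:ℤ) ≤ A - B - 1),
      mul_nonneg (by linarith : (0:ℤ) ≤ A - B - 1) (by linarith : (0:ℤ) ≤ A),
      mul_nonneg (sub_nonneg.2 hB) (by linarith : (0:ℤ) ≤ B),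
      mul_nonneg (by linarith : (0:ℤ) ≤ N - 2 * A - 14) (by linarith : (0:ℤ) ≤ A * B - 1)]
  set qa := n / (a + 1)
  set qb := n / (b + 1)
  have hza : (n : ℤ) < (a + 1) * qa + (a + 1) := by exact_mod_cast hda
  have hzb : (n : ℤ) < (b + 1) * qb + (b + 1) := by exact_mod_cast hdb
  have hzQ : (a : ℤ) * qa + b * qb ≤ n := by exact_mod_cast hQab
  have hkey := key a b n (by exact_mod_cast hb) (by exact_mod_cast hba) (by exact_mod_cast hn)
  have ha1 : (0:ℤ) < (a : ℤ) := by exact_mod_cast Nat.lt_of_lt_of_le hb (le_of_lt hba)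
  have hb1 : (0:ℤ) < (b : ℤ) := by exact_mod_cast hb
  nlinarith [mul_le_mul_of_nonneg_left hza.le (by positivity : (0:ℤ) ≤ (a:ℤ) * (b + 1)),
    mul_le_mul_of_nonneg_left hzb.le (by positivity : (0:ℤ) ≤ (b:ℤ) * (a + 1)),
    mul_le_mul_of_nonneg_left hzQ (by positivity : (0:ℤ) ≤ ((a:ℤ) + 1) * (b + 1))]
end

section
/- Let d ≥ 1, let B_0 ⊂ ℝ^d be a bounded Borel set with positive Lebesgue measure whose boundary has Lebesgue measure zero, and let n ≥ 6. Let U_1, …, U_n be independent random points each uniformly distributed on B_0 (law equal to the normalized restriction of Lebesgue measure to B_0). Almost surely all pairwise distances among U_1, …, U_n are distinct, so the random variables R = R^{(1)}({U_1,…,U_n}) (the number of reflexive nearest-neighbor pairs) and Q = Q^{(1)}({U_1,…,U_n}) (the number of shared nearest-neighbor triples) are almost surely well defined. Then R and Q are not independent random variables. -/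
open MeasureTheory ProbabilityTheory

/-- `Q^{(1)}(V)`: the number of shared nearest-neighbor triples `({u,w}, v)` with `u ≠ w`,
`NN(u) = v` and `NN(w) = v`. -/
noncomputable def sharedCount1 {d : ℕ} (V : Set (EuclideanSpace ℝ (Fin d))) : ℕ :=
  {q : Sym2 (EuclideanSpace ℝ (Fin d)) × EuclideanSpace ℝ (Fin d) |
    ∃ u w, q.1 = s(u, w) ∧ u ≠ w ∧ u ∈ V ∧ w ∈ V ∧ q.2 ∈ V ∧
      IsNN V u q.2 ∧ IsNN V w q.2}.ncard

section Comb
variable {d : ℕ}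
local notation "E" => EuclideanSpace ℝ (Fin d)

def reflSet (V : Set E) : Set (Sym2 E) :=
  {p | ∃ u v, p = s(u, v) ∧ u ≠ v ∧ u ∈ V ∧ v ∈ V ∧ IsNN V u v ∧ IsNN V v u}

def sharedSet (V : Set E) : Set (Sym2 E × E) :=
  {q | ∃ u w, q.1 = s(u, w) ∧ u ≠ w ∧ u ∈ V ∧ w ∈ V ∧ q.2 ∈ V ∧
      IsNN V u q.2 ∧ IsNN V w q.2}

lemma reflCount_eq (V : Set E) : reflCount V = (reflSet V).ncard := rfl
lemma sharedCount1_eq (V : Set E) : sharedCount1 V = (sharedSet V).ncard := rfl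

lemma isNN_unique_s19 {V : Set E} {u v w : E} (h1 : IsNN V u v) (h2 : IsNN V u w) : v = w := by
  by_contra hne
  have a := h1.2.2 w h2.1 h2.2.1 (fun h => hne h.symm)
  have b := h2.2.2 v h1.1 h1.2.1 hne
  linarith

def mutSet (V : Set E) : Set E := {x | x ∈ V ∧ ∃ y, IsNN V x y ∧ IsNN V y x}

lemma mutSet_subset (V : Set E) : mutSet V ⊆ V := fun _ h => h.1

lemma reflSet_finite {V : Set E} (hV : V.Finite) : (reflSet V).Finite := by
  apply Set.Finite.subset (Set.Finite.image (fun z : E × E => s(z.1, z.2)) (hV.prod hV))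
  rintro p ⟨u, v, rfl, _, hu, hv, _⟩
  exact ⟨(u, v), ⟨hu, hv⟩, rfl⟩

lemma sharedSet_finite {V : Set E} (hV : V.Finite) : (sharedSet V).Finite := by
  apply Set.Finite.subset ((Set.Finite.image (fun z : E × E => s(z.1, z.2)) (hV.prod hV)).prod hV)
  rintro ⟨p, t⟩ ⟨u, w, hp, _, hu, hw, ht, _⟩
  exact ⟨⟨(u, w), ⟨hu, hw⟩, hp.symm⟩, ht⟩

lemma two_mul_reflCount_le {V : Set E} (hV : V.Finite) :
    2 * reflCount V ≤ (mutSet V).ncard := by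
  classical
  have hfin : (mutSet V).Finite := hV.subset (mutSet_subset V)
  haveI := hfin.to_subtype
  have hrep : ∀ p : reflSet V, ∃ z : E × E, (p : Sym2 E) = s(z.1, z.2) ∧ z.1 ≠ z.2 ∧
      z.1 ∈ V ∧ z.2 ∈ V ∧ IsNN V z.1 z.2 ∧ IsNN V z.2 z.1 := by
    rintro ⟨p, u, v, h⟩; exact ⟨(u, v), h⟩
  choose z hz1 hz2 hz3 hz4 hz5 hz6 using hrep
  -- key : membership determines the pair
  have key : ∀ (p : reflSet V) (x y : E), (p : Sym2 E) = s(x, y) → IsNN V x y →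
      ∀ (q : reflSet V) (y' : E), (q : Sym2 E) = s(x, y') → IsNN V x y' → p = q := by
    intro p x y hp hxy q y' hq hxy'
    have : y = y' := isNN_unique_s19 hxy hxy'
    exact Subtype.ext (by rw [hp, hq, this])
  set F : reflSet V × Bool → (mutSet V : Set E) :=
    fun pb => if pb.2 then ⟨(z pb.1).1, hz3 pb.1, (z pb.1).2, hz5 pb.1, hz6 pb.1⟩
      else ⟨(z pb.1).2, hz4 pb.1, (z pb.1).1, hz6 pb.1, hz5 pb.1⟩ with hF
  have hFinj : Function.Injective F := by
    rintro ⟨p, b⟩ ⟨q, c⟩ h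
    have hval : ((F (p, b)) : E) = ((F (q, c)) : E) := by rw [h]
    have repT : ∀ (p : reflSet V), (p : Sym2 E) = s((z p).1, (z p).2) := fun p => hz1 p
    have repF : ∀ (p : reflSet V), (p : Sym2 E) = s((z p).2, (z p).1) := fun p => by
      rw [repT p]; exact Sym2.eq_swap
    have hpq : p = q := by
      cases b <;> cases c <;>
        simp only [hF, if_true, if_false, Bool.false_eq_true, reduceIte] at hval
      · have h1 := repF q; have h2 := hz6 q; rw [← hval] at h1 h2
        exact key p _ _ (repF p) (hz6 p) q _ h1 h2
      · have h1 := repT q; have h2 := hz5 q; rw [← hval] at h1 h2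
        exact key p _ _ (repF p) (hz6 p) q _ h1 h2
      · have h1 := repF q; have h2 := hz6 q; rw [← hval] at h1 h2
        exact key p _ _ (repT p) (hz5 p) q _ h1 h2
      · have h1 := repT q; have h2 := hz5 q; rw [← hval] at h1 h2
        exact key p _ _ (repT p) (hz5 p) q _ h1 h2
    subst hpq
    have hbc : b = c := by
      cases b <;> cases c
      · rfl
      · simp only [hF, if_true, if_false, Bool.false_eq_true, reduceIte] at hval
        exact absurd hval.symm (hz2 p)
      · simp only [hF, if_true, if_false, Bool.false_eq_true, reduceIte] at hval
        exact absurd hval (hz2 p)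
      · rfl
    rw [hbc]
  have hcard := Nat.card_le_card_of_injective F hFinj
  rw [Nat.card_prod, Nat.card_coe_set_eq, Nat.card_coe_set_eq] at hcard
  simpa [Nat.card_eq_fintype_card, mul_comm, reflCount_eq] using hcard

lemma bothMut {V : Set E} {u w t : E} (h1 : IsNN V u t) (h2 : IsNN V w t)
    (hu : u ∈ mutSet V) (hw : w ∈ mutSet V) : u = w := by
  obtain ⟨-, y, hy1, hy2⟩ := hu
  obtain ⟨-, y', hy1', hy2'⟩ := hw
  have : t = y := isNN_unique_s19 h1 hy1
  subst this
  have : t = y' := isNN_unique_s19 h2 hy1'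
  subst this
  exact isNN_unique_s19 hy2 hy2'

lemma sharedSet_empty {V : Set E} (h : ∀ u ∈ V, u ∈ mutSet V) : sharedSet V = ∅ := by
  ext q
  simp only [Set.mem_empty_iff_false, iff_false]
  rintro ⟨u, w, hp, huw, huV, hwV, htV, h1, h2⟩
  exact huw (bothMut h1 h2 (h u huV) (h w hwV))

lemma sharedSet_subsingleton {V : Set E} (x : E) (h : ∀ u ∈ V, u ∉ mutSet V → u = x) :
    (sharedSet V).Subsingleton := by
  have norm : ∀ q ∈ sharedSet V, ∃ b, q.1 = s(x, b) ∧ b ∈ mutSet V ∧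
      IsNN V x q.2 ∧ IsNN V b q.2 := by
    rintro q ⟨u, w, hp, huw, huV, hwV, htV, h1, h2⟩
    rcases (em (u ∈ mutSet V)) with hu | hu
    · rcases (em (w ∈ mutSet V)) with hw | hw
      · exact absurd (bothMut h1 h2 hu hw) huw
      · have hwx := h w hwV hw
        subst hwx
        exact ⟨u, by rw [hp]; exact Sym2.eq_swap, hu, h2, h1⟩
    · have hux := h u huV hu
      subst hux
      rcases (em (w ∈ mutSet V)) with hw | hw
      · exact ⟨w, hp, hw, h1, h2⟩
      · exact absurd (h w hwV hw).symm huw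
  intro q hq q' hq'
  obtain ⟨b, hb1, hb2, hb3, hb4⟩ := norm q hq
  obtain ⟨b', hb1', hb2', hb3', hb4'⟩ := norm q' hq'
  have ht : q.2 = q'.2 := isNN_unique_s19 hb3 hb3'
  have hIb : IsNN V q.2 b := by
    obtain ⟨-, y, hy1, hy2⟩ := hb2
    have : q.2 = y := isNN_unique_s19 hb4 hy1
    subst this; exact hy2
  have hIb' : IsNN V q.2 b' := by
    obtain ⟨-, y, hy1, hy2⟩ := hb2'
    have : q'.2 = y := isNN_unique_s19 hb4' hy1
    rw [ht]; rw [this] at ht ⊢; exact hy2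
  have hbb : b = b' := isNN_unique_s19 hIb hIb'
  have : q.1 = q'.1 := by rw [hb1, hb1', hbb]
  exact Prod.ext this ht

lemma comb_main {V : Set E} {n : ℕ} (hV : V.Finite) (hn6 : 6 ≤ n) (hcard : V.ncard = n)
    (hR : n / 2 ≤ reflCount V) : sharedCount1 V ≤ n % 2 := by
  have hmut := two_mul_reflCount_le hV
  have hsub := mutSet_subset V
  have hmutfin : (mutSet V).Finite := hV.subset hsub
  have hmutle : (mutSet V).ncard ≤ n := hcard ▸ Set.ncard_le_ncard hsub hV
  rcases Nat.even_or_odd n with he | ho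
  · have he2 : n % 2 = 0 := Nat.even_iff.mp he
    have heq : mutSet V = V := Set.eq_of_subset_of_ncard_le hsub (by omega) hV
    rw [sharedCount1_eq, sharedSet_empty (fun u hu => heq.symm ▸ hu)]
    simp
  · have hmod : n % 2 = 1 := Nat.odd_iff.mp ho
    rw [hmod]
    by_cases hall : ∀ u ∈ V, u ∈ mutSet V
    · rw [sharedCount1_eq, sharedSet_empty hall]; simp
    · push_neg at hall
      obtain ⟨x, hxV, hx⟩ := hall
      have h1 : (V \ mutSet V).ncard ≤ 1 := by
        rw [Set.ncard_diff hsub hmutfin, hcard]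
        omega
      have hone : ∀ u ∈ V, u ∉ mutSet V → u = x := by
        intro u huV hu
        have hmem : u ∈ V \ mutSet V := ⟨huV, hu⟩
        have hmemx : x ∈ V \ mutSet V := ⟨hxV, hx⟩
        exact (Set.ncard_le_one hV.sdiff).mp h1 u hmem x hmemx
      rcases (sharedSet_subsingleton x hone).eq_empty_or_singleton with h | ⟨a, ha⟩
      · rw [sharedCount1_eq, h]; simp
      · rw [sharedCount1_eq, ha]; simp

section Geom
variable {n K : ℕ}

lemma cluster_close {u : Fin n → E} {κ : Fin n → Fin K} {c : Fin K → E} {r : ℝ}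
    (hin : ∀ i, dist (u i) (c (κ i)) < r) {i j : Fin n} (h : κ i = κ j) :
    dist (u i) (u j) < 2 * r := by
  have h1 := hin i
  have h2 := hin j
  rw [← h] at h2
  have := dist_triangle_right (u i) (u j) (c (κ i))
  linarith

lemma cluster_far {u : Fin n → E} {κ : Fin n → Fin K} {c : Fin K → E} {r : ℝ}
    (hsep : ∀ s t, s ≠ t → 6 * r ≤ dist (c s) (c t))
    (hin : ∀ i, dist (u i) (c (κ i)) < r) {i j : Fin n} (h : κ i ≠ κ j) :
    4 * r < dist (u i) (u j) := by
  have h1 := hin i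
  have h2 := hin j
  have h3 := hsep _ _ h
  have h4 := dist_triangle4 (c (κ i)) (u i) (u j) (c (κ j))
  have h5 := dist_comm (c (κ i)) (u i)
  have h6 := dist_comm (u j) (c (κ j))
  linarith

lemma pair_isNN {u : Fin n → E} {κ : Fin n → Fin K} {c : Fin K → E} {r : ℝ}
    (hinj : Function.Injective u)
    (hsep : ∀ s t, s ≠ t → 6 * r ≤ dist (c s) (c t))
    (hin : ∀ i, dist (u i) (c (κ i)) < r) {i j : Fin n} (hij : i ≠ j) (hji : κ j = κ i)
    (hcl : ∀ t, κ t = κ i → t = i ∨ t = j) :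
    IsNN (Set.range u) (u i) (u j) := by
  refine ⟨⟨j, rfl⟩, fun h => hij (hinj h).symm, ?_⟩
  rintro w ⟨t, rfl⟩ hti htj
  have h1 : t ≠ i := fun h => hti (by rw [h])
  have h2 : t ≠ j := fun h => htj (by rw [h])
  have h3 : κ t ≠ κ i := fun h => by rcases hcl t h with h' | h' <;> [exact h1 h'; exact h2 h']
  have h4 := cluster_far hsep hin (fun h => h3 h.symm)
  have h5 := cluster_close hin hji.symm
  have hr : 0 < r := lt_of_le_of_lt dist_nonneg (hin i)
  linarith

lemma triple_nn {u : Fin n → E} {κ : Fin n → Fin K} {c : Fin K → E} {r : ℝ}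
    (hinj : Function.Injective u) (hdd : DistinctDists (Set.range u))
    (hsep : ∀ s t, s ≠ t → 6 * r ≤ dist (c s) (c t))
    (hin : ∀ i, dist (u i) (c (κ i)) < r) {i j k : Fin n}
    (hij : i ≠ j) (hik : i ≠ k) (hjk : j ≠ k) (hji : κ j = κ i) (hki : κ k = κ i)
    (hcl : ∀ t, κ t = κ i → t = i ∨ t = j ∨ t = k) :
    IsNN (Set.range u) (u i) (u j) ∨ IsNN (Set.range u) (u i) (u k) := by
  have hr : 0 < r := lt_of_le_of_lt dist_nonneg (hin i)
  have hne : dist (u i) (u j) ≠ dist (u i) (u k) := by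
    intro h
    rcases hdd (u i) (u j) (u i) (u k) ⟨i, rfl⟩ ⟨j, rfl⟩ ⟨i, rfl⟩ ⟨k, rfl⟩
      (fun h' => hij (hinj h')) (fun h' => hik (hinj h')) h with ⟨-, h2⟩ | ⟨h1, -⟩
    · exact hjk (hinj h2)
    · exact hik (hinj h1)
  rcases lt_or_gt_of_ne hne with hlt | hgt
  · left
    refine ⟨⟨j, rfl⟩, fun h => hij (hinj h).symm, ?_⟩
    rintro w ⟨t, rfl⟩ hti htj
    have h1 : t ≠ i := fun h => hti (by rw [h])
    have h2 : t ≠ j := fun h => htj (by rw [h])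
    by_cases h3 : t = k
    · rw [h3]; exact hlt
    · have h4 : κ t ≠ κ i := fun h => by
        rcases hcl t h with h' | h' | h' <;> [exact h1 h'; exact h2 h'; exact h3 h']
      have h5 := cluster_far hsep hin (fun h => h4 h.symm)
      have h6 := cluster_close hin hji.symm
      linarith
  · right
    refine ⟨⟨k, rfl⟩, fun h => hik (hinj h).symm, ?_⟩
    rintro w ⟨t, rfl⟩ hti htk
    have h1 : t ≠ i := fun h => hti (by rw [h])
    have h2 : t ≠ k := fun h => htk (by rw [h])
    by_cases h3 : t = j
    · rw [h3]; exact hgt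
    · have h4 : κ t ≠ κ i := fun h => by
        rcases hcl t h with h' | h' | h' <;> [exact h1 h'; exact h3 h'; exact h2 h']
      have h5 := cluster_far hsep hin (fun h => h4 h.symm)
      have h6 := cluster_close hin hki.symm
      linarith

lemma triple_shared {u : Fin n → E} {κ : Fin n → Fin K} {c : Fin K → E} {r : ℝ}
    (hinj : Function.Injective u) (hdd : DistinctDists (Set.range u))
    (hsep : ∀ s t, s ≠ t → 6 * r ≤ dist (c s) (c t))
    (hin : ∀ i, dist (u i) (c (κ i)) < r) {i j k : Fin n}
    (hij : i ≠ j) (hik : i ≠ k) (hjk : j ≠ k) (hji : κ j = κ i) (hki : κ k = κ i)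
    (hcl : ∀ t, κ t = κ i → t = i ∨ t = j ∨ t = k) :
    ∃ q ∈ sharedSet (Set.range u), ∃ t₀ : Fin n, q.2 = u t₀ ∧ (t₀ = i ∨ t₀ = j ∨ t₀ = k) := by
  classical
  have hclj : ∀ t, κ t = κ j → t = j ∨ t = i ∨ t = k := fun t h => by
    rcases hcl t (h.trans hji) with h' | h' | h' <;> tauto
  have hclk : ∀ t, κ t = κ k → t = k ∨ t = i ∨ t = j := fun t h => by
    rcases hcl t (h.trans hki) with h' | h' | h' <;> tauto
  have hi := triple_nn hinj hdd hsep hin hij hik hjk hji hki hcl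
  have hj := triple_nn hinj hdd hsep hin (Ne.symm hij) hjk hik hji.symm (hki.trans hji.symm) hclj
  have hk := triple_nn hinj hdd hsep hin (Ne.symm hik) (Ne.symm hjk) hij hki.symm
    (hji.trans hki.symm) hclk
  -- helper to build a sharedSet element
  have mk : ∀ a b t : Fin n, a ≠ b → IsNN (Set.range u) (u a) (u t) →
      IsNN (Set.range u) (u b) (u t) →
      (s(u a, u b), u t) ∈ sharedSet (Set.range u) :=
    fun a b t hab h1 h2 =>
      ⟨u a, u b, rfl, fun h => hab (hinj h), ⟨a, rfl⟩, ⟨b, rfl⟩, ⟨t, rfl⟩, h1, h2⟩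
  -- cycle contradiction helper
  have cyc : ∀ a b e : Fin n, a ≠ b → a ≠ e → b ≠ e →
      IsNN (Set.range u) (u a) (u b) → IsNN (Set.range u) (u b) (u e) →
      IsNN (Set.range u) (u e) (u a) → False := by
    intro a b e hab hae hbe h1 h2 h3
    have d1 := h1.2.2 (u e) ⟨e, rfl⟩ (fun h => hae (hinj h).symm) (fun h => hbe (hinj h).symm)
    have d2 := h2.2.2 (u a) ⟨a, rfl⟩ (fun h => hab (hinj h)) (fun h => hae (hinj h))
    have d3 := h3.2.2 (u b) ⟨b, rfl⟩ (fun h => hbe (hinj h)) (fun h => hab (hinj h).symm)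
    have e1 := dist_comm (u a) (u b)
    have e2 := dist_comm (u b) (u e)
    have e3 := dist_comm (u e) (u a)
    linarith
  rcases hi with h1 | h1 <;> rcases hj with h2 | h2 <;> rcases hk with h3 | h3
  · -- i→j, j→i, k→i  : j,k share i
    exact ⟨_, mk j k i hjk h2 h3, i, rfl, Or.inl rfl⟩
  · -- i→j, j→i, k→j : i,k share j
    exact ⟨_, mk i k j hik h1 h3, j, rfl, Or.inr (Or.inl rfl)⟩
  · -- i→j, j→k, k→i : cycle
    exact absurd (cyc i j k hij hik hjk h1 h2 h3) not_false
  · -- i→j, j→k, k→j : i,k share j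
    exact ⟨_, mk i k j hik h1 h3, j, rfl, Or.inr (Or.inl rfl)⟩
  · -- i→k, j→i, k→i : j,k share i
    exact ⟨_, mk j k i hjk h2 h3, i, rfl, Or.inl rfl⟩
  · -- i→k, j→i, k→j : cycle i→k→j→i
    exact absurd (cyc i k j hik hij (Ne.symm hjk) h1 h3 h2) not_false
  · -- i→k, j→k, k→i : i,j share k
    exact ⟨_, mk i j k hij h1 h2, k, rfl, Or.inr (Or.inr rfl)⟩
  · -- i→k, j→k, k→j : i,j share k
    exact ⟨_, mk i j k hij h1 h2, k, rfl, Or.inr (Or.inr rfl)⟩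

lemma R_lower {u : Fin n → E} (hinj : Function.Injective u) (hn : 6 ≤ n)
    {c : Fin ((n + 1) / 2) → E} {r : ℝ}
    (hsep : ∀ s t, s ≠ t → 6 * r ≤ dist (c s) (c t))
    (hin : ∀ i : Fin n, dist (u i) (c ⟨i.1 / 2, by omega⟩) < r) :
    n / 2 ≤ reflCount (Set.range u) := by
  classical
  set κ : Fin n → Fin ((n + 1) / 2) := fun i => ⟨i.1 / 2, by omega⟩ with hκ
  have hVfin : (Set.range u).Finite := Set.finite_range u
  haveI := (reflSet_finite hVfin).to_subtype
  have hmem : ∀ t : Fin (n / 2),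
      s(u ⟨2 * t.1, by omega⟩, u ⟨2 * t.1 + 1, by omega⟩) ∈ reflSet (Set.range u) := by
    intro t
    set i : Fin n := ⟨2 * t.1, by omega⟩
    set j : Fin n := ⟨2 * t.1 + 1, by omega⟩
    have hij : i ≠ j := by simp [i, j, Fin.ext_iff]
    have hji : κ j = κ i := by simp only [hκ, Fin.ext_iff, i, j]; omega
    have hcl : ∀ s, κ s = κ i → s = i ∨ s = j := by
      intro s h
      simp only [hκ, Fin.ext_iff, i, j] at h ⊢
      omega
    have hcl' : ∀ s, κ s = κ j → s = j ∨ s = i := by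
      intro s h
      simp only [hκ, Fin.ext_iff, i, j] at h ⊢
      omega
    have h1 := pair_isNN hinj hsep hin hij hji hcl
    have h2 := pair_isNN hinj hsep hin (Ne.symm hij) hji.symm hcl'
    exact ⟨u i, u j, rfl, fun h => hij (hinj h), ⟨i, rfl⟩, ⟨j, rfl⟩, h1, h2⟩
  set F : Fin (n / 2) → (reflSet (Set.range u) : Set (Sym2 E)) :=
    fun t => ⟨_, hmem t⟩ with hFdef
  have hFinj : Function.Injective F := by
    intro t t' h
    have := congrArg Subtype.val h
    simp only [hFdef] at this
    rcases Sym2.eq_iff.mp this with ⟨h1, -⟩ | ⟨h1, -⟩ <;>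
    · have := hinj h1
      simp only [Fin.ext_iff] at this ⊢
      omega
  have := Nat.card_le_card_of_injective F hFinj
  rw [Nat.card_eq_fintype_card, Fintype.card_fin, Nat.card_coe_set_eq] at this
  rwa [reflCount_eq]

lemma Q_lower {u : Fin n → E} (hinj : Function.Injective u) (hdd : DistinctDists (Set.range u))
    (hn : 6 ≤ n) {c : Fin (n - 4) → E} {r : ℝ}
    (hsep : ∀ s t, s ≠ t → 6 * r ≤ dist (c s) (c t))
    (hin : ∀ i : Fin n, dist (u i)
      (c ⟨if i.1 < 3 then 0 else if i.1 < 6 then 1 else i.1 - 4, by have := i.2; split_ifs <;> omega⟩) < r) :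
    2 ≤ sharedCount1 (Set.range u) := by
  classical
  set κ : Fin n → Fin (n - 4) :=
    fun i => ⟨if i.1 < 3 then 0 else if i.1 < 6 then 1 else i.1 - 4, by have := i.2; split_ifs <;> omega⟩ with hκ
  have hVfin : (Set.range u).Finite := Set.finite_range u
  have hκv : ∀ s : Fin n, (κ s : ℕ) = if s.1 < 3 then 0 else if s.1 < 6 then 1 else s.1 - 4 :=
    fun s => rfl
  have tri : ∀ a : Fin 2, ∃ q ∈ sharedSet (Set.range u), ∃ t₀ : Fin n, q.2 = u t₀ ∧
      (3 * a.1 ≤ t₀.1 ∧ t₀.1 < 3 * a.1 + 3) := by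
    intro a
    have ha2 : a.1 < 2 := a.2
    set i : Fin n := ⟨3 * a.1, by omega⟩ with hidef
    set j : Fin n := ⟨3 * a.1 + 1, by omega⟩ with hjdef
    set k : Fin n := ⟨3 * a.1 + 2, by omega⟩ with hkdef
    have hiv : (i : ℕ) = 3 * a.1 := rfl
    have hjv : (j : ℕ) = 3 * a.1 + 1 := rfl
    have hkv : (k : ℕ) = 3 * a.1 + 2 := rfl
    have hij : i ≠ j := by rw [Ne, Fin.ext_iff, hiv, hjv]; omega
    have hik : i ≠ k := by rw [Ne, Fin.ext_iff, hiv, hkv]; omega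
    have hjk : j ≠ k := by rw [Ne, Fin.ext_iff, hjv, hkv]; omega
    have hji : κ j = κ i := by
      rw [Fin.ext_iff, hκv, hκv, hiv, hjv]; split_ifs <;> omega
    have hki : κ k = κ i := by
      rw [Fin.ext_iff, hκv, hκv, hiv, hkv]; split_ifs <;> omega
    have hcl : ∀ s, κ s = κ i → s = i ∨ s = j ∨ s = k := by
      intro s h
      rw [Fin.ext_iff, hκv, hκv, hiv] at h
      simp only [Fin.ext_iff, hiv, hjv, hkv]
      split_ifs at h <;> omega
    obtain ⟨q, hq, t₀, ht₀, hmem⟩ := triple_shared hinj hdd hsep hin hij hik hjk hji hki hcl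
    refine ⟨q, hq, t₀, ht₀, ?_⟩
    rcases hmem with h | h | h <;> rw [h] <;> [rw [hiv]; rw [hjv]; rw [hkv]] <;> omega
  obtain ⟨q1, hq1, t1, ht1, hr1⟩ := tri 0
  obtain ⟨q2, hq2, t2, ht2, hr2⟩ := tri 1
  have hne : q1 ≠ q2 := by
    intro h
    rw [h, ht2] at ht1
    have := hinj ht1.symm
    simp only [Fin.ext_iff] at this
    simp at hr1 hr2
    omega
  have hsubset : {q1, q2} ⊆ sharedSet (Set.range u) := by
    rintro q (rfl | rfl)
    · exact hq1
    · exact hq2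
  calc 2 = ({q1, q2} : Set (Sym2 E × E)).ncard := (Set.ncard_pair hne).symm
    _ ≤ (sharedSet (Set.range u)).ncard := Set.ncard_le_ncard hsubset (sharedSet_finite hVfin)

end Geom

lemma good_implies {n : ℕ} (hn : 6 ≤ n) {u : Fin n → E}
    (hg : ∀ i j k l : Fin n, l ≠ i → l ≠ j → l ≠ k →
      dist (u i) (u j) ≠ dist (u k) (u l)) :
    Function.Injective u ∧ DistinctDists (Set.range u) := by
  classical
  have hinj : Function.Injective u := by
    intro a b h
    by_contra hab
    have hex : ∃ i : Fin n, i ≠ a ∧ i ≠ b := by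
      by_contra hc
      push_neg at hc
      have hsub : (Finset.univ : Finset (Fin n)) ⊆ {a, b} := by
        intro i _
        simp only [Finset.mem_insert, Finset.mem_singleton]
        by_cases hia : i = a
        · exact Or.inl hia
        · exact Or.inr (hc i hia)
      have h1 := Finset.card_le_card hsub
      have h2 := Finset.card_insert_le a ({b} : Finset (Fin n))
      simp only [Finset.card_univ, Fintype.card_fin, Finset.card_singleton] at h1 h2
      omega
    obtain ⟨i, hia, hib⟩ := hex
    refine hg i i a b hib.symm hib.symm (fun h' => hab h'.symm) ?_
    rw [dist_self, h, dist_self]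
  refine ⟨hinj, ?_⟩
  rintro x y x' y' hx hy hx' hy' hxy hx'y' hdist
  obtain ⟨a, ha⟩ := hx
  obtain ⟨b, hb⟩ := hy
  obtain ⟨a', ha'⟩ := hx'
  obtain ⟨b', hb'⟩ := hy'
  subst ha hb ha' hb'
  have hab : a ≠ b := fun h => hxy (by rw [h])
  have hab' : a' ≠ b' := fun h => hx'y' (by rw [h])
  by_cases h1 : a' = a ∨ a' = b
  · by_cases h2 : b' = a ∨ b' = b
    · rcases h1 with h1 | h1 <;> rcases h2 with h2 | h2
      · exact absurd (h1.trans h2.symm) hab'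
      · exact Or.inl ⟨by rw [h1], by rw [h2]⟩
      · exact Or.inr ⟨by rw [h2], by rw [h1]⟩
      · exact absurd (h1.trans h2.symm) hab'
    · push_neg at h2
      exact absurd hdist (hg a b a' b' (fun h => h2.1 h) (fun h => h2.2 h)
        (fun h => hab' h.symm))
  · push_neg at h1
    by_cases h2 : b' = a ∨ b' = b
    · refine absurd hdist ?_
      have := hg a b b' a' (fun h => h1.1 h) (fun h => h1.2 h) (fun h => hab' h)
      rw [dist_comm (u b') (u a')] at this
      exact this
    · push_neg at h2
      exact absurd hdist (hg a b a' b' (fun h => h2.1 h) (fun h => h2.2 h)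
        (fun h => hab' h.symm))


lemma null_dist {Ω : Type*} [MeasureSpace Ω] [IsProbabilityMeasure (ℙ : Measure Ω)]
    {U : Fin n → Ω → E} (hUmeas : ∀ i, Measurable (U i))
    (hindep : iIndepFun U ℙ)
    {ν : Measure E} (hsph : ∀ (x : E) (ρ : ℝ), ν (Metric.sphere x ρ) = 0)
    (hident : ∀ i, Measure.map (U i) ℙ = ν)
    {i j k l : Fin n} (hli : l ≠ i) (hlj : l ≠ j) (hlk : l ≠ k) :
    ℙ {ω | dist (U i ω) (U j ω) = dist (U k ω) (U l ω)} = 0 := by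
  classical
  set S : Finset (Fin n) := {i, j, k} with hS
  have hD : Disjoint S ({l} : Finset (Fin n)) := by
    simp only [hS, Finset.disjoint_singleton_right, Finset.mem_insert, Finset.mem_singleton]
    push_neg
    exact ⟨hli, hlj, hlk⟩
  have hIF := hindep.indepFun_finset S {l} hD hUmeas
  have hiS : i ∈ S := by simp [hS]
  have hjS : j ∈ S := by simp [hS]
  have hkS : k ∈ S := by simp [hS]
  set φ : (∀ _ : {x // x ∈ S}, E) → E × E × E :=
    fun v => (v ⟨i, hiS⟩, v ⟨j, hjS⟩, v ⟨k, hkS⟩) with hφ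
  set ψ : (∀ _ : {x // x ∈ ({l} : Finset (Fin n))}, E) → E :=
    fun v => v ⟨l, by simp⟩ with hψ
  have hφm : Measurable φ := by fun_prop
  have hψm : Measurable ψ := by fun_prop
  have hIF2 : IndepFun (fun ω => (U i ω, U j ω, U k ω)) (U l) ℙ := hIF.comp hφm hψm
  have hZm : Measurable fun ω => (U i ω, U j ω, U k ω) :=
    (hUmeas i).prodMk ((hUmeas j).prodMk (hUmeas k))
  have hmap := (indepFun_iff_map_prod_eq_prod_map_map hZm.aemeasurable
    (hUmeas l).aemeasurable).mp hIF2
  set A : Set ((E × E × E) × E) := {p | dist p.1.1 p.1.2.1 = dist p.1.2.2 p.2} with hA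
  have hAm : MeasurableSet A := by
    apply measurableSet_eq_fun <;> fun_prop
  have hev : {ω | dist (U i ω) (U j ω) = dist (U k ω) (U l ω)}
      = (fun ω => ((U i ω, U j ω, U k ω), U l ω)) ⁻¹' A := rfl
  rw [hev, ← Measure.map_apply (hZm.prodMk (hUmeas l)) hAm]
  have : Measure.map (fun ω => ((U i ω, U j ω, U k ω), U l ω)) ℙ
      = (Measure.map (fun ω => (U i ω, U j ω, U k ω)) ℙ).prod (Measure.map (U l) ℙ) := hmap
  rw [this]
  haveI : IsProbabilityMeasure (Measure.map (fun ω => (U i ω, U j ω, U k ω)) ℙ) :=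
    Measure.isProbabilityMeasure_map hZm.aemeasurable
  haveI : IsProbabilityMeasure (Measure.map (U l) ℙ) :=
    Measure.isProbabilityMeasure_map (hUmeas l).aemeasurable
  rw [Measure.prod_apply hAm]
  have hslice : ∀ z : E × E × E, (Measure.map (U l) ℙ) (Prod.mk z ⁻¹' A) = 0 := by
    intro z
    have : Prod.mk z ⁻¹' A = Metric.sphere z.2.2 (dist z.1 z.2.1) := by
      ext x
      simp only [hA, Set.mem_preimage, Set.mem_setOf_eq, Metric.mem_sphere]
      rw [dist_comm x z.2.2]
      exact eq_comm
    rw [this, hident l, hsph]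
  simp only [hslice]
  simp
lemma ae_good {Ω : Type*} [MeasureSpace Ω] [IsProbabilityMeasure (ℙ : Measure Ω)]
    {U : Fin n → Ω → E} (hUmeas : ∀ i, Measurable (U i))
    (hindep : iIndepFun U ℙ)
    {ν : Measure E} (hsph : ∀ (x : E) (ρ : ℝ), ν (Metric.sphere x ρ) = 0)
    (hident : ∀ i, Measure.map (U i) ℙ = ν) :
    ∀ᵐ ω ∂(ℙ : Measure Ω), ∀ i j k l : Fin n, l ≠ i → l ≠ j → l ≠ k →
      dist (U i ω) (U j ω) ≠ dist (U k ω) (U l ω) := by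
  refine ae_all_iff.mpr fun i => ae_all_iff.mpr fun j => ae_all_iff.mpr fun k =>
    ae_all_iff.mpr fun l => ?_
  by_cases h : l ≠ i ∧ l ≠ j ∧ l ≠ k
  · have h0 := null_dist hUmeas hindep hsph hident h.1 h.2.1 h.2.2
    rw [ae_iff]
    refine measure_mono_null ?_ h0
    intro ω hω
    simp only [Set.mem_setOf_eq, Classical.not_imp, not_not] at hω
    exact hω.2.2.2
  · refine Filter.Eventually.of_forall fun ω h1 h2 h3 => absurd ⟨h1, h2, h3⟩ h

lemma exists_sep {K : ℕ} (c : Fin K → E) (hc : Function.Injective c) :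
    ∃ r : ℝ, 0 < r ∧ ∀ s t, s ≠ t → 6 * r ≤ dist (c s) (c t) := by
  classical
  set P := (Finset.univ : Finset (Fin K × Fin K)).filter (fun p => p.1 ≠ p.2) with hP
  by_cases hPne : P.Nonempty
  · set δ := P.inf' hPne (fun p => dist (c p.1) (c p.2)) with hδ
    have hδpos : 0 < δ := by
      rw [hδ, Finset.lt_inf'_iff]
      intro p hp
      simp only [hP, Finset.mem_filter, Finset.mem_univ, true_and] at hp
      exact dist_pos.mpr (fun h => hp (hc h))
    refine ⟨δ / 6, by positivity, fun s t h => ?_⟩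
    have hmem : (s, t) ∈ P := by simp [hP, h]
    have := Finset.inf'_le (fun p => dist (c p.1) (c p.2)) hmem
    calc 6 * (δ / 6) = δ := by ring
      _ ≤ dist (c s) (c t) := this
  · refine ⟨1, one_pos, fun s t h => absurd ?_ hPne⟩
    exact ⟨(s, t), by simp [hP, h]⟩

lemma exists_centers (hd : 1 ≤ d) (B₀ : Set E) (hmeas : MeasurableSet B₀)
    (hbdd : Bornology.IsBounded B₀) (hpos : 0 < volume B₀) (K : ℕ) :
    ∃ c : Fin K → E, Function.Injective c ∧
      ∀ a (r : ℝ), 0 < r → 0 < volume (B₀ ∩ Metric.ball (c a) r) := by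
  classical
  haveI : Nonempty (Fin d) := ⟨⟨0, hd⟩⟩
  set T := volume.everywherePosSubset B₀ with hT
  have hae := Measure.everywherePosSubset_ae_eq_of_measure_ne_top (μ := volume) hmeas hbdd.measure_lt_top.ne
  have hTpos : 0 < volume T := by rw [measure_congr hae]; exact hpos
  have hTinf : T.Infinite := by
    by_contra h
    rw [Set.not_infinite] at h
    exact absurd (h.measure_zero _) hTpos.ne'
  obtain ⟨t, hsub, hcard⟩ := hTinf.exists_subset_card_eq K
  set e := t.equivFinOfCardEq hcard with he
  refine ⟨fun a => (e.symm a : E), ?_, ?_⟩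
  · intro a b h
    exact e.symm.injective (Subtype.coe_injective h)
  · intro a r hr
    have hmem : ((e.symm a : E)) ∈ T := hsub (e.symm a).2
    exact hmem.2 _ (inter_mem_nhdsWithin _ (Metric.ball_mem_nhds _ hr))

lemma cfg_pos {Ω : Type*} [MeasureSpace Ω] [IsProbabilityMeasure (ℙ : Measure Ω)]
    {U : Fin n → Ω → E} (hUmeas : ∀ i, Measurable (U i))
    (hindep : iIndepFun U ℙ)
    {B₀ : Set E} (hlaw : ∀ i, Measure.map (U i) ℙ = ProbabilityTheory.cond volume B₀)
    (hmeas : MeasurableSet B₀) (hfin : volume B₀ ≠ ⊤)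
    {K : ℕ} (κ : Fin n → Fin K) (c : Fin K → E)
    (hc : ∀ a (r : ℝ), 0 < r → 0 < volume (B₀ ∩ Metric.ball (c a) r)) {r : ℝ} (hr : 0 < r) :
    0 < ℙ (⋂ i, U i ⁻¹' Metric.ball (c (κ i)) r) := by
  have hprod := hindep.measure_inter_preimage_eq_mul Finset.univ
    (sets := fun i => Metric.ball (c (κ i)) r) (fun i _ => measurableSet_ball)
  have huniv : (⋂ i, U i ⁻¹' Metric.ball (c (κ i)) r)
      = ⋂ i ∈ Finset.univ, U i ⁻¹' Metric.ball (c (κ i)) r := by simp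
  rw [huniv, hprod]
  refine CanonicallyOrderedAdd.prod_pos.mpr fun i _ => ?_
  rw [← Measure.map_apply (hUmeas i) measurableSet_ball, hlaw i,
    ProbabilityTheory.cond_apply hmeas]
  exact ENNReal.mul_pos (ENNReal.inv_ne_zero.mpr hfin) (hc (κ i) r hr).ne'



end Comb
/-- For `n ≥ 6` i.i.d. uniform points on a bounded Borel set `B₀ ⊆ ℝ^d` (`d ≥ 1`) of positive
volume with null boundary, almost surely all pairwise distances are distinct, and the number of
reflexive NN pairs and the number of shared NN triples are *not* independent random variables. -/
theorem reflCount_not_indep_sharedCount (d : ℕ) (hd : 1 ≤ d)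
    (B₀ : Set (EuclideanSpace ℝ (Fin d))) (hmeas : MeasurableSet B₀)
    (hbdd : Bornology.IsBounded B₀) (hpos : 0 < MeasureTheory.volume B₀)
    (hbound : MeasureTheory.volume (frontier B₀) = 0)
    (n : ℕ) (hn : 6 ≤ n)
    (Ω : Type*) [MeasureSpace Ω] [IsProbabilityMeasure (ℙ : Measure Ω)]
    (U : Fin n → Ω → EuclideanSpace ℝ (Fin d)) (hUmeas : ∀ i, Measurable (U i))
    (hindep : iIndepFun U ℙ)
    (hlaw : ∀ i, Measure.map (U i) ℙ =
      ProbabilityTheory.cond MeasureTheory.volume B₀) :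
    (∀ᵐ ω ∂(ℙ : Measure Ω), DistinctDists (Set.range fun i => U i ω)) ∧
    ¬ IndepFun (fun ω => reflCount (Set.range fun i => U i ω))
        (fun ω => sharedCount1 (Set.range fun i => U i ω)) ℙ := by
  classical
  haveI : Nonempty (Fin d) := ⟨⟨0, hd⟩⟩
  have hvfin : volume B₀ ≠ ⊤ := hbdd.measure_lt_top.ne
  have hsph : ∀ (x : EuclideanSpace ℝ (Fin d)) (ρ : ℝ),
      (ProbabilityTheory.cond volume B₀) (Metric.sphere x ρ) = 0 := by
    intro x ρ
    rw [ProbabilityTheory.cond_apply hmeas]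
    have h0 : volume (B₀ ∩ Metric.sphere x ρ) = 0 :=
      measure_mono_null Set.inter_subset_right (Measure.addHaar_sphere volume x ρ)
    rw [h0, mul_zero]
  have hgood := ae_good hUmeas hindep hsph hlaw
  have haegood : ∀ᵐ ω ∂(ℙ : Measure Ω), Function.Injective (fun i => U i ω) ∧
      DistinctDists (Set.range fun i => U i ω) :=
    hgood.mono fun ω h => good_implies hn h
  refine ⟨haegood.mono fun ω h => h.2, ?_⟩
  intro hInd
  set f := fun ω => reflCount (Set.range fun i => U i ω) with hf
  set g := fun ω => sharedCount1 (Set.range fun i => U i ω) with hg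
  set A : Set ℕ := {m | n / 2 ≤ m} with hA
  set B : Set ℕ := {m | n % 2 + 1 ≤ m} with hB
  have hbadnull : ℙ {ω | ¬ (Function.Injective (fun i => U i ω) ∧
      DistinctDists (Set.range fun i => U i ω))} = 0 := by
    rw [← ae_iff]; exact haegood
  -- LHS is zero
  have hLHS : ℙ (f ⁻¹' A ∩ g ⁻¹' B) = 0 := by
    refine measure_mono_null ?_ hbadnull
    rintro ω ⟨hA', hB'⟩
    intro hgd
    obtain ⟨hinj, hdd⟩ := hgd
    have hVfin : (Set.range fun i => U i ω).Finite := Set.finite_range _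
    have hVcard : (Set.range fun i => U i ω).ncard = n := by
      rw [← Set.image_univ, Set.ncard_image_of_injective _ hinj, Set.ncard_univ, Nat.card_eq_fintype_card, Fintype.card_fin]
    have hcomb := comb_main hVfin hn hVcard hA'
    have hb : n % 2 + 1 ≤ g ω := hB'
    simp only [hg] at hb
    omega
  -- RHS positive : event A
  obtain ⟨c1, hc1inj, hc1pos⟩ := exists_centers hd B₀ hmeas hbdd hpos ((n + 1) / 2)
  obtain ⟨r1, hr1, hsep1⟩ := exists_sep c1 hc1inj
  have hcfg1 := cfg_pos hUmeas hindep hlaw hmeas hvfin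
    (fun i : Fin n => (⟨i.1 / 2, by omega⟩ : Fin ((n + 1) / 2))) c1 hc1pos hr1
  obtain ⟨c2, hc2inj, hc2pos⟩ := exists_centers hd B₀ hmeas hbdd hpos (n - 4)
  obtain ⟨r2, hr2, hsep2⟩ := exists_sep c2 hc2inj
  have hcfg2 := cfg_pos hUmeas hindep hlaw hmeas hvfin
    (fun i : Fin n => (⟨if i.1 < 3 then 0 else if i.1 < 6 then 1 else i.1 - 4,
      by have := i.2; split_ifs <;> omega⟩ : Fin (n - 4))) c2 hc2pos hr2
  set Cfg1 := ⋂ i, U i ⁻¹' Metric.ball (c1 ⟨i.1 / 2, by omega⟩) r1 with hCfg1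
  set Cfg2 := ⋂ i, U i ⁻¹' Metric.ball
    (c2 ⟨if i.1 < 3 then 0 else if i.1 < 6 then 1 else i.1 - 4,
      by have := i.2; split_ifs <;> omega⟩) r2 with hCfg2
  set Good := {ω | Function.Injective (fun i => U i ω) ∧
      DistinctDists (Set.range fun i => U i ω)} with hGood
  have hposint : ∀ (S : Set Ω), 0 < ℙ S → 0 < ℙ (S ∩ Good) := by
    intro S hS
    have hsub : S ⊆ (S ∩ Good) ∪ {ω | ¬ (Function.Injective (fun i => U i ω) ∧
        DistinctDists (Set.range fun i => U i ω))} := by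
      intro ω h
      by_cases hg' : ω ∈ Good
      · exact Or.inl ⟨h, hg'⟩
      · exact Or.inr hg'
    have h1 : ℙ S ≤ ℙ ((S ∩ Good) ∪ {ω | ¬ (Function.Injective (fun i => U i ω) ∧
        DistinctDists (Set.range fun i => U i ω))}) := measure_mono hsub
    have h2 := measure_union_le (μ := (ℙ : Measure Ω)) (S ∩ Good) {ω | ¬ (Function.Injective (fun i => U i ω) ∧
        DistinctDists (Set.range fun i => U i ω))}
    rw [hbadnull, add_zero] at h2
    exact lt_of_lt_of_le hS (h1.trans h2)
  have hsubA : Cfg1 ∩ Good ⊆ f ⁻¹' A := by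
    rintro ω ⟨hball, hinj, hdd⟩
    have hin : ∀ i : Fin n, dist (U i ω) (c1 ⟨i.1 / 2, by omega⟩) < r1 := by
      intro i
      have := Set.mem_iInter.mp hball i
      simpa [Metric.mem_ball] using this
    exact R_lower hinj hn hsep1 hin
  have hsubB : Cfg2 ∩ Good ⊆ g ⁻¹' B := by
    rintro ω ⟨hball, hinj, hdd⟩
    have hin : ∀ i : Fin n, dist (U i ω)
        (c2 ⟨if i.1 < 3 then 0 else if i.1 < 6 then 1 else i.1 - 4,
          by have := i.2; split_ifs <;> omega⟩) < r2 := by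
      intro i
      have := Set.mem_iInter.mp hball i
      simpa [Metric.mem_ball] using this
    have h2 := Q_lower hinj hdd hn hsep2 hin
    show n % 2 + 1 ≤ g ω
    simp only [hg]
    omega
  have hApos : 0 < ℙ (f ⁻¹' A) :=
    lt_of_lt_of_le (hposint _ hcfg1) (measure_mono hsubA)
  have hBpos : 0 < ℙ (g ⁻¹' B) :=
    lt_of_lt_of_le (hposint _ hcfg2) (measure_mono hsubB)
  have hprodrule := hInd.measure_inter_preimage_eq_mul A B trivial trivial
  rw [hLHS] at hprodrule
  exact absurd hprodrule.symm (ENNReal.mul_pos hApos.ne' hBpos.ne').ne'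
end
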